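/- arXiv:1307.1353 — 3 statements merged into one kernel-verified Lean document; each statement's English description precedes it below -/
import Mathlib

section
/- The following non-relationships hold: (1) ℒ ⋠ 𝒯; (2) 𝒯 ⋠ 𝒫; (3) 𝒫 ⋠ ℱ_d for every d ≥ 0. -/
open SimpleGraph

/-- The reflexive closure of the adjacency relation of a graph. -/
def reflAdj {α : Type} (G : SimpleGraph α) (a b : α) : Prop := a = b ∨ G.Adj a b

/-- A set of vertices induces a connected subgraph of `G`. -/
def ConnSet {α : Type} (G : SimpleGraph α) (s : Set α) : Prop := (G.induce s).Connected

/-- `B` is an `H`-deconstruction of `G`: coverage and connectivity. -/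
def IsDeconstruction {α β : Type} (G : SimpleGraph α) (H : SimpleGraph β)
    (B : β → Set α) : Prop :=
  (∀ g g' : α, reflAdj G g g' →
      ∃ h h' : β, reflAdj H h h' ∧ g ∈ B h ∪ B h' ∧ g' ∈ B h ∪ B h') ∧
  (∀ g : α, ConnSet H {h | g ∈ B h})

/-- The family `B` (viewed as an `H`-indexed family of bags) has width at most `w`. -/
def DeconWidthLE {α β : Type} (H : SimpleGraph β) (B : β → Set α) (w : ℕ) : Prop :=
  ∀ h h' : β, reflAdj H h h' → (B h ∪ B h').ncard ≤ w

/-- `B` is an `H`-decomposition of `G`: each (refl-)edge inside a single bag, plus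
connectivity. -/
def IsDecomposition {α β : Type} (G : SimpleGraph α) (H : SimpleGraph β)
    (B : β → Set α) : Prop :=
  (∀ g g' : α, reflAdj G g g' → ∃ h : β, g ∈ B h ∧ g' ∈ B h) ∧
  (∀ g : α, ConnSet H {h | g ∈ B h})

/-- A finite simple graph, presented on a vertex set `Fin n`. -/
structure FinGraph where
  n : ℕ
  G : SimpleGraph (Fin n)

/-- `𝒢 ≼ ℋ` : every graph in `𝒢` has an `H`-deconstruction of width `≤ w`
for some `H ∈ ℋ`, for a uniform constant `w`. -/
def DeconLE (𝒢 ℋ : Set FinGraph) : Prop :=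
  ∃ w : ℕ, ∀ G ∈ 𝒢, ∃ H ∈ ℋ, ∃ B : Fin H.n → Set (Fin G.n),
    IsDeconstruction G.G H.G B ∧ DeconWidthLE H.G B w

/-- `𝒢 ≡ ℋ`. -/
def DeconEquiv (𝒢 ℋ : Set FinGraph) : Prop := DeconLE 𝒢 ℋ ∧ DeconLE ℋ 𝒢

/-- `𝒢 ≺ ℋ`. -/
def DeconLT (𝒢 ℋ : Set FinGraph) : Prop := DeconLE 𝒢 ℋ ∧ ¬ DeconEquiv 𝒢 ℋ

/-- `μ` is a minor map from `M` to `G`. -/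
def IsMinorMap {α β : Type} (M : SimpleGraph α) (G : SimpleGraph β)
    (μ : α → Set β) : Prop :=
  (∀ m : α, ConnSet G (μ m)) ∧
  (∀ m m' : α, m ≠ m' → Disjoint (μ m) (μ m')) ∧
  (∀ m m' : α, M.Adj m m' → ∃ g ∈ μ m, ∃ g' ∈ μ m', G.Adj g g')

/-- `M` is a minor of `G`. -/
def IsMinor (M G : FinGraph) : Prop :=
  ∃ μ : Fin M.n → Set (Fin G.n), IsMinorMap M.G G.G μ

/-- The class of all minors of graphs in `𝒢`. -/
def minorsCl (𝒢 : Set FinGraph) : Set FinGraph := {M | ∃ G ∈ 𝒢, IsMinor M G}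

/-- The (connected) graph `G`, viewed as a tree, has height at most `d`:
some rooting puts every vertex within distance `d` of the root. -/
def treeHeightLE (G : FinGraph) (d : ℕ) : Prop :=
  ∃ r : Fin G.n, ∀ v : Fin G.n, G.G.dist r v ≤ d

/-- Every connected component of `G` has height at most `d`. -/
def forestHeightLE (G : FinGraph) (d : ℕ) : Prop :=
  ∀ v : Fin G.n, ∃ r : Fin G.n, G.G.Reachable r v ∧
    ∀ u : Fin G.n, G.G.Reachable r u → G.G.dist r u ≤ d

/-- `ℒ` : the class of all finite simple graphs. -/
def classL : Set FinGraph := Set.univ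

/-- `𝒯` : the class of all finite trees. -/
def classT : Set FinGraph := {G | G.G.IsTree}

/-- `𝒫` : the class of all finite paths (on at least two vertices). -/
def classP : Set FinGraph := {G | ∃ m : ℕ, 2 ≤ m ∧ Nonempty (G.G ≃g pathGraph m)}

/-- `𝒯_d` : all finite trees of height at most `d`. -/
def classTd (d : ℕ) : Set FinGraph := {G | G.G.IsTree ∧ treeHeightLE G d}

/-- `ℱ_d` : all finite forests of height at most `d`. -/
def classFd (d : ℕ) : Set FinGraph := {G | G.G.IsAcyclic ∧ forestHeightLE G d}

/-- The complete `k`-ary tree `T_{h,k}` of height `h`, on strings over `[k]` of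
length at most `h`; each string of length `< h` is joined to its one-symbol extensions. -/
def kAryTree (h k : ℕ) : SimpleGraph {l : List (Fin k) // l.length ≤ h} :=
  SimpleGraph.fromRel (fun a b => ∃ i : Fin k, b.1 = i :: a.1)

/-- For every `k ≥ 1`, the tree `T_{h,k}` is a minor of some graph in `𝒢`. -/
def StackAll (𝒢 : Set FinGraph) (h : ℕ) : Prop :=
  ∀ k : ℕ, 1 ≤ k → ∃ G ∈ 𝒢, ∃ μ : {l : List (Fin k) // l.length ≤ h} → Set (Fin G.n),
    IsMinorMap (kAryTree h k) G.G μ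

/-- `𝒢` has stack depth (exactly) `d`. -/
def HasStackDepth (𝒢 : Set FinGraph) (d : ℕ) : Prop :=
  StackAll 𝒢 d ∧ ¬ StackAll 𝒢 (d + 1)

/-- The tree depth of `G` is at most `h`: there is a rooted forest on the vertex
set of `G` (given by a parent function whose fixed points are the roots) of height
at most `h` whose (ancestor-descendant) closure contains all edges of `G`. -/
def TreeDepthLE {α : Type} (G : SimpleGraph α) (h : ℕ) : Prop :=
  ∃ par : α → α,
    (∀ v : α, par (par^[h] v) = par^[h] v) ∧
    (∀ u v : α, G.Adj u v → (∃ k : ℕ, par^[k] u = v) ∨ (∃ k : ℕ, par^[k] v = u))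

/-- The class `𝒢` has bounded tree depth. -/
def HasBoundedTreeDepth (𝒢 : Set FinGraph) : Prop :=
  ∃ h : ℕ, ∀ G ∈ 𝒢, TreeDepthLE G.G h

/-- The class `𝒢` has bounded treewidth (via tree decompositions). -/
def HasBoundedTreewidth (𝒢 : Set FinGraph) : Prop :=
  ∃ w : ℕ, ∀ G ∈ 𝒢, ∃ H : FinGraph, H.G.IsTree ∧
    ∃ B : Fin H.n → Set (Fin G.n), IsDecomposition G.G H.G B ∧ ∀ h, (B h).ncard ≤ w + 1

/-- The class `𝒢` has bounded pathwidth (via path decompositions). -/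
def HasBoundedPathwidth (𝒢 : Set FinGraph) : Prop :=
  ∃ w : ℕ, ∀ G ∈ 𝒢, ∃ H : FinGraph, H ∈ classP ∧
    ∃ B : Fin H.n → Set (Fin G.n), IsDecomposition G.G H.G B ∧ ∀ h, (B h).ncard ≤ w + 1

/-- A finite rooted tree. -/
structure RootedFinTree where
  n : ℕ
  G : SimpleGraph (Fin n)
  isTree : G.IsTree
  root : Fin n

/-- `c` is a child of `p` in the rooted tree `T`. -/
def RootedFinTree.IsChild (T : RootedFinTree) (p c : Fin T.n) : Prop :=
  T.G.Adj p c ∧ T.G.dist T.root c = T.G.dist T.root p + 1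

/-- `a` is an ancestor of `v` in the rooted tree `T` (i.e. `a` lies on the unique
path from the root to `v`). -/
def RootedFinTree.Ancestor (T : RootedFinTree) (a v : Fin T.n) : Prop :=
  T.G.dist T.root v = T.G.dist T.root a + T.G.dist a v

/-- `(μ m)_{m}` is a nice `M`-deconstruction of `G`, for rooted trees `M`, `G`. -/
def IsNiceDecon (M G : RootedFinTree) (μ : Fin M.n → Set (Fin G.n)) : Prop :=
  IsDeconstruction G.G M.G μ ∧
  IsMinorMap M.G G.G μ ∧
  G.root ∈ μ M.root ∧
  (∀ (m m' : Fin M.n) (g g' : Fin G.n),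
    M.IsChild m m' → g ∈ μ m → g' ∈ μ m' → G.G.Adj g g' → G.IsChild g g')

/-- The node `u` of the rooted tree `T` has property `P(d,k)`. -/
def PropP (T : RootedFinTree) (k : ℕ) : ℕ → Fin T.n → Prop
  | 0, _ => True
  | d + 1, u => ∃ s : Finset (Fin T.n), s.card = k ∧
      (∀ v ∈ s, T.Ancestor u v) ∧
      (∀ v ∈ s, ∀ w ∈ s, v ≠ w → ¬ T.Ancestor v w ∧ ¬ T.Ancestor w v) ∧
      (∀ v ∈ s, PropP T k d v)

section Infra

variable {α β : Type}

lemma reflAdj_symm {H : SimpleGraph β} {a b : β} (h : reflAdj H a b) : reflAdj H b a :=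
  h.imp Eq.symm Adj.symm

lemma connSet_nonempty {H : SimpleGraph β} {s : Set β} (h : ConnSet H s) : s.Nonempty := by
  obtain ⟨⟨x, hx⟩⟩ := h.nonempty
  exact ⟨x, hx⟩

lemma connSet_walk {H : SimpleGraph β} {s : Set β} (h : ConnSet H s) {x y : β}
    (hx : x ∈ s) (hy : y ∈ s) : ∃ p : H.Walk x y, ∀ v ∈ p.support, v ∈ s := by
  obtain ⟨q⟩ := h.preconnected ⟨x, hx⟩ ⟨y, hy⟩
  classical
  let f : H.induce s →g H := ⟨Subtype.val, fun {a b} hab => hab⟩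
  refine ⟨q.map f, fun v hv => ?_⟩
  rw [SimpleGraph.Walk.support_map] at hv
  obtain ⟨⟨u, hu⟩, _, rfl⟩ := List.mem_map.mp hv
  exact hu

lemma close {G : SimpleGraph α} {H : SimpleGraph β} {B : β → Set α}
    (hd : IsDeconstruction G H B) {g g' : α} (hgg : reflAdj G g g') :
    ∃ x y : β, g ∈ B x ∧ g' ∈ B y ∧ reflAdj H x y := by
  obtain ⟨h, h', hr, hg, hg'⟩ := hd.1 g g' hgg
  rcases hg with hg | hg <;> rcases hg' with hg' | hg'
  · exact ⟨h, h, hg, hg', Or.inl rfl⟩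
  · exact ⟨h, h', hg, hg', hr⟩
  · exact ⟨h', h, hg, hg', reflAdj_symm hr⟩
  · exact ⟨h', h', hg, hg', Or.inl rfl⟩

lemma card_le_of_univ_subset {n w : ℕ} {H : SimpleGraph β} {B : β → Set (Fin n)}
    (hw : DeconWidthLE H B w) {h h' : β} (hr : reflAdj H h h')
    (hu : (Set.univ : Set (Fin n)) ⊆ B h ∪ B h') : n ≤ w := by
  have := Set.ncard_le_ncard hu (Set.toFinite _)
  rw [Set.ncard_univ, Nat.card_eq_fintype_card, Fintype.card_fin] at this
  exact this.trans (hw h h' hr)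

/-- Walks avoiding a vertex. -/
def Avoid (H : SimpleGraph β) (h u v : β) : Prop := ∃ p : H.Walk u v, h ∉ p.support

lemma Avoid.symm {H : SimpleGraph β} {h u v : β} (ha : Avoid H h u v) : Avoid H h v u := by
  obtain ⟨p, hp⟩ := ha
  exact ⟨p.reverse, by rwa [SimpleGraph.Walk.support_reverse, List.mem_reverse]⟩

lemma Avoid.trans {H : SimpleGraph β} {h u v x : β} (ha : Avoid H h u v) (hb : Avoid H h v x) :
    Avoid H h u x := by
  obtain ⟨p, hp⟩ := ha
  obtain ⟨q, hq⟩ := hb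
  refine ⟨p.append q, fun hc => ?_⟩
  rcases (SimpleGraph.Walk.mem_support_append_iff _ _).mp hc with hc | hc
  exacts [hp hc, hq hc]

lemma Avoid.ne_left {H : SimpleGraph β} {h u v : β} (ha : Avoid H h u v) : u ≠ h := by
  obtain ⟨p, hp⟩ := ha
  exact fun he => hp (he ▸ p.start_mem_support)

lemma avoid_of_reflAdj {H : SimpleGraph β} {h u v : β} (hr : reflAdj H u v)
    (hu : u ≠ h) (hv : v ≠ h) : Avoid H h u v := by
  rcases hr with rfl | hr
  · exact ⟨SimpleGraph.Walk.nil, by simp [Ne.symm hu]⟩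
  · refine ⟨hr.toWalk, ?_⟩
    simp only [SimpleGraph.Adj.toWalk, SimpleGraph.Walk.support_cons,
      SimpleGraph.Walk.support_nil, List.mem_cons, List.mem_singleton]
    rintro (rfl | rfl | h) <;> simp_all

lemma avoid_of_conn {H : SimpleGraph β} {s : Set β} {h u v : β} (hc : ConnSet H s)
    (hns : h ∉ s) (hu : u ∈ s) (hv : v ∈ s) : Avoid H h u v := by
  obtain ⟨p, hp⟩ := connSet_walk hc hu hv
  exact ⟨p, fun hmem => hns (hp h hmem)⟩

/-- Unique branch: two neighbours of `h` joined by a walk avoiding `h` coincide. -/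
lemma unique_branch {H : SimpleGraph β} (hac : H.IsAcyclic) {h h1 h2 : β}
    (ha1 : H.Adj h h1) (ha2 : H.Adj h h2) (hA : Avoid H h h1 h2) : h1 = h2 := by
  classical
  by_contra hne
  obtain ⟨p, hp⟩ := hA
  have hq : h ∉ p.bypass.support := fun hc => hp (p.support_bypass_subset hc)
  have hP1 : (SimpleGraph.Walk.cons ha1 p.bypass).IsPath := (p.bypass_isPath).cons hq
  have hP2 : ha2.toWalk.IsPath := SimpleGraph.Walk.IsPath.nil.cons (by simp [ha2.ne])
  have := SimpleGraph.isAcyclic_iff_path_unique.mp hac ⟨_, hP1⟩ ⟨_, hP2⟩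
  have hmem : h1 ∈ (SimpleGraph.Walk.cons ha1 p.bypass).support := by
    simp [SimpleGraph.Walk.support_cons]
  rw [show (SimpleGraph.Walk.cons ha1 p.bypass) = ha2.toWalk from congrArg Subtype.val this] at hmem
  simp only [SimpleGraph.Adj.toWalk, SimpleGraph.Walk.support_cons,
    SimpleGraph.Walk.support_nil, List.mem_cons, List.mem_singleton] at hmem
  rcases hmem with rfl | rfl | hmem
  · exact ha1.ne rfl
  · exact hne rfl
  · simp at hmem

lemma avoid_asymm {H : SimpleGraph β} (hac : H.IsAcyclic) {h h1 y : β}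
    (ha1 : H.Adj h h1) (hA : Avoid H h h1 y) (hB : Avoid H h1 h y) : False := by
  classical
  obtain ⟨q, hq⟩ := hA
  obtain ⟨r, hr⟩ := hB
  have hqb : h ∉ q.bypass.support := fun hc => hq (q.support_bypass_subset hc)
  have hP1 : (SimpleGraph.Walk.cons ha1 q.bypass).IsPath := (q.bypass_isPath).cons hqb
  have hrb : h1 ∉ r.bypass.support := fun hc => hr (r.support_bypass_subset hc)
  have := SimpleGraph.isAcyclic_iff_path_unique.mp hac ⟨_, hP1⟩ ⟨_, r.bypass_isPath⟩
  have hmem : h1 ∈ (SimpleGraph.Walk.cons ha1 q.bypass).support := by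
    simp [SimpleGraph.Walk.support_cons]
  rw [show (SimpleGraph.Walk.cons ha1 q.bypass) = r.bypass from congrArg Subtype.val this] at hmem
  exact hrb hmem

end Infra


section Part1

variable {N n w : ℕ}

theorem tree_decon_clique {H : SimpleGraph (Fin N)} (hH : H.IsTree) {B : Fin N → Set (Fin n)}
    (hd : IsDeconstruction (⊤ : SimpleGraph (Fin n)) H B) (hw : DeconWidthLE H B w) : n ≤ w := by
  classical
  set S : Fin n → Set (Fin N) := fun g => {h | g ∈ B h} with hS
  have hconn : ∀ g, ConnSet H (S g) := hd.2
  have hac : H.IsAcyclic := hH.IsAcyclic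
  -- pairwise link
  have hlink : ∀ g g' : Fin n, ∃ x y : Fin N, x ∈ S g ∧ y ∈ S g' ∧ reflAdj H x y := by
    intro g g'
    have hr : reflAdj (⊤ : SimpleGraph (Fin n)) g g' := by
      by_cases hgg : g = g'
      · exact Or.inl hgg
      · exact Or.inr (by simpa using hgg)
    obtain ⟨x, y, hx, hy, hxy⟩ := close hd hr
    exact ⟨x, y, hx, hy, hxy⟩
  -- sets avoiding h are pairwise in the same branch
  have hbranch : ∀ (h : Fin N) (g g' : Fin n), h ∉ S g → h ∉ S g' →
      ∀ x ∈ S g, ∀ y ∈ S g', Avoid H h x y := by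
    intro h g g' hg hg' x hx y hy
    obtain ⟨x0, y0, hx0, hy0, hxy0⟩ := hlink g g'
    have h1 : Avoid H h x x0 := avoid_of_conn (hconn g) hg hx hx0
    have h2 : Avoid H h x0 y0 :=
      avoid_of_reflAdj hxy0 (fun he => hg (he ▸ hx0)) (fun he => hg' (he ▸ hy0))
    have h3 : Avoid H h y0 y := avoid_of_conn (hconn g') hg' hy0 hy
    exact (h1.trans h2).trans h3
  -- main induction
  have main : ∀ (m : ℕ) (F : Finset (Fin N)) (h0 : Fin N), h0 ∉ F →
      (Finset.univ \ F).card ≤ m →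
      (∀ (g : Fin n) (x : Fin N), h0 ∉ S g → x ∈ S g →
        ∃ p : H.Walk h0 x, p.IsPath ∧ ∀ v ∈ p.support, v ∉ F) → n ≤ w := by
    intro m
    induction m with
    | zero =>
      intro F h0 hh0 hcard _
      exfalso
      have : h0 ∈ Finset.univ \ F := by simp [hh0]
      have := Finset.card_pos.mpr ⟨h0, this⟩
      omega
    | succ m ih =>
      intro F h0 hh0 hcard K
      by_cases hall : ∀ g, h0 ∈ S g
      · exact card_le_of_univ_subset hw (Or.inl rfl)
          (fun g _ => Set.mem_union_left _ (hall g))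
      push_neg at hall
      obtain ⟨g0, hg0⟩ := hall
      obtain ⟨x0, hx0⟩ := connSet_nonempty (hconn g0)
      obtain ⟨p0, hp0path, hp0F⟩ := K g0 x0 hg0 hx0
      cases p0 with
      | nil => exact absurd hx0 hg0
      | @cons _ h1 _ ha q0 =>
        have hq0path : q0.IsPath := hp0path.of_cons
        have hh0q0 : h0 ∉ q0.support := ((SimpleGraph.Walk.cons_isPath_iff _ _).mp hp0path).2
        have hh1F : h1 ∉ F := hp0F h1 (by simp)
        have havoid_h1x0 : Avoid H h0 h1 x0 := ⟨q0, hh0q0⟩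
        by_cases hB1 : ∀ g, h0 ∈ S g ∨ h1 ∈ S g
        · refine card_le_of_univ_subset hw (Or.inr ha) (fun g _ => ?_)
          rcases hB1 g with hg | hg
          exacts [Set.mem_union_left _ hg, Set.mem_union_right _ hg]
        push_neg at hB1
        obtain ⟨g1, hg1h0, hg1h1⟩ := hB1
        -- apply induction hypothesis with F' = insert h0 F and root h1
        refine ih (insert h0 F) h1 (by simp [ha.ne', hh1F]) ?_ ?_
        · have hsub : Finset.univ \ insert h0 F = (Finset.univ \ F).erase h0 := by
            ext v; simp [and_comm]
          rw [hsub, Finset.card_erase_of_mem (by simp [hh0])]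
          omega
        · intro g x hgh1 hx
          by_cases hgh0 : h0 ∈ S g
          · exfalso
            obtain ⟨xs, ys, hxs, hys, hxys⟩ := hlink g g1
            have hA1 : Avoid H h1 h0 xs := avoid_of_conn (hconn g) hgh1 hgh0 hxs
            have hA2 : Avoid H h1 xs ys :=
              avoid_of_reflAdj hxys (fun he => hgh1 (he ▸ hxs)) (fun he => hg1h1 (he ▸ hys))
            have hA : Avoid H h1 h0 ys := hA1.trans hA2
            have hB : Avoid H h0 h1 ys :=
              havoid_h1x0.trans (hbranch h0 g0 g1 hg0 hg1h0 x0 hx0 ys hys)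
            exact avoid_asymm hac ha hB hA
          · obtain ⟨p, hppath, hpF⟩ := K g x hgh0 hx
            cases p with
            | nil => exact absurd hx hgh0
            | @cons _ a0 _ ha' q =>
              have hqpath : q.IsPath := hppath.of_cons
              have hh0q : h0 ∉ q.support := ((SimpleGraph.Walk.cons_isPath_iff _ _).mp hppath).2
              have heq : a0 = h1 := by
                refine unique_branch hac ha' ha ?_
                have h1' : Avoid H h0 a0 x := ⟨q, hh0q⟩
                have h2' : Avoid H h0 x x0 := hbranch h0 g g0 hgh0 hg0 x hx x0 hx0
                exact (h1'.trans h2').trans havoid_h1x0.symm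
              subst heq
              refine ⟨q, hqpath, fun v hv => ?_⟩
              simp only [Finset.mem_insert, not_or]
              exact ⟨fun he => hh0q (he ▸ hv), hpF v (by simp [hv])⟩
  -- kick off
  have hne : Nonempty (Fin N) := hH.isConnected.nonempty
  obtain ⟨h0⟩ := hne
  refine main N ∅ h0 (by simp) (by simp) ?_
  intro g x _ _
  obtain ⟨p⟩ := hH.isConnected.preconnected h0 x
  exact ⟨p.bypass, p.bypass_isPath, by simp⟩

end Part1


section Part3

variable {β : Type}

/-- Split a nontrivial path into its first edge and the rest. -/
lemma path_first_edge {H : SimpleGraph β} {r x : β} (p : H.Walk r x) (hpath : p.IsPath)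
    (hne : r ≠ x) : ∃ (r' : β) (ha : H.Adj r r') (q : H.Walk r' x), q.IsPath ∧
      r ∉ q.support ∧ q.length + 1 = p.length ∧ ∀ v ∈ q.support, v ∈ p.support := by
  cases p with
  | nil => exact absurd rfl hne
  | cons ha q =>
    exact ⟨_, ha, q, hpath.of_cons, ((SimpleGraph.Walk.cons_isPath_iff _ _).mp hpath).2,
      rfl, fun v hv => by simp [SimpleGraph.Walk.support_cons, hv]⟩

lemma ncard_val_interval {n a b : ℕ} (hb : b ≤ n) :
    {g : Fin n | a ≤ g.val ∧ g.val < b}.ncard = b - a := by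
  classical
  have h1 : {g : Fin n | a ≤ g.val ∧ g.val < b} =
      ↑((Finset.Ico a b).attachFin (fun m hm => lt_of_lt_of_le (Finset.mem_Ico.mp hm).2 hb)) := by
    ext g; simp [Finset.mem_attachFin, Finset.mem_Ico]
  rw [h1, Set.ncard_coe_finset, Finset.card_attachFin, Nat.card_Ico]

theorem forest_decon_path {N n w d : ℕ} {H : SimpleGraph (Fin N)} (hac : H.IsAcyclic)
    {B : Fin N → Set (Fin n)} (hd : IsDeconstruction (pathGraph n) H B)
    (hw : DeconWidthLE H B w)
    (hht : ∀ v : Fin N, ∃ r : Fin N, H.Reachable r v ∧ ∀ u, H.Reachable r u → H.dist r u ≤ d)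
    (hn : 1 ≤ n) : n ≤ (w + 2) ^ (d + 1) := by
  classical
  set S : Fin n → Set (Fin N) := fun g => {h | g ∈ B h} with hS
  have hconn : ∀ g, ConnSet H (S g) := hd.2
  have hlink : ∀ (i : ℕ) (hi1 : i + 1 < n), ∃ x y : Fin N,
      x ∈ S ⟨i, by omega⟩ ∧ y ∈ S ⟨i + 1, hi1⟩ ∧ reflAdj H x y := by
    intro i hi1
    have hadj : (pathGraph n).Adj ⟨i, by omega⟩ ⟨i + 1, hi1⟩ := by
      rw [SimpleGraph.pathGraph_adj]; left; rfl
    obtain ⟨x, y, hx, hy, hxy⟩ := close hd (Or.inr hadj)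
    exact ⟨x, y, hx, hy, hxy⟩
  have Q : ∀ (d' : ℕ) (F : Set (Fin N)) (r : Fin N) (a b : ℕ), a ≤ b → b ≤ n →
      (∀ (i : ℕ) (hi : i < n), a ≤ i → i < b → ∀ x ∈ S ⟨i, hi⟩,
        ∃ p : H.Walk r x, p.length ≤ d' ∧ ∀ v ∈ p.support, v ∉ F) →
      b - a ≤ (w + 2) ^ (d' + 1) := by
    intro d'
    induction d' with
    | zero =>
      intro F r a b hab hbn hroot
      have hsub : {g : Fin n | a ≤ g.val ∧ g.val < b} ⊆ B r ∪ B r := by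
        rintro g ⟨h1, h2⟩
        obtain ⟨x, hx⟩ := connSet_nonempty (hconn g)
        obtain ⟨p, hlen, -⟩ := hroot g.val g.isLt h1 h2 x (by rwa [Fin.eta])
        have hrx : r = x := p.eq_of_length_eq_zero (Nat.le_zero.mp hlen)
        exact Set.mem_union_left _ (by exact hrx ▸ hx)
      have hc := Set.ncard_le_ncard hsub (Set.toFinite _)
      rw [ncard_val_interval hbn] at hc
      have := hc.trans (hw r r (Or.inl rfl))
      have h2 : w ≤ (w + 2) ^ (0 + 1) := by simpa using by omega
      omega
    | succ d' ihq =>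
      intro F r a b hab hbn hroot
      set M := (w + 2) ^ (d' + 1) with hM
      have hMw : w + 1 ≤ M := by
        calc w + 1 ≤ w + 2 := by omega
          _ = (w + 2) ^ 1 := (pow_one _).symm
          _ ≤ M := Nat.pow_le_pow_right (by omega) (by omega)
      set I := {g : Fin n | a ≤ g.val ∧ g.val < b ∧ r ∈ S g} with hI
      have hIw : I.ncard ≤ w := by
        refine le_trans (Set.ncard_le_ncard ?_ (Set.toFinite _)) (hw r r (Or.inl rfl))
        rintro g ⟨-, -, hg⟩
        exact Set.mem_union_left _ hg
      -- every window of length M+1 inside [a,b) meets I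
      have W : ∀ c : ℕ, a ≤ c → c + M < b → ∃ g ∈ I, c ≤ g.val ∧ g.val ≤ c + M := by
        intro c hac' hcMb
        by_contra hno
        push_neg at hno
        have hnr : ∀ (j : ℕ) (hj : c + j < n), j ≤ M → r ∉ S ⟨c + j, hj⟩ := by
          intro j hj hjM hmem
          have := hno ⟨c + j, hj⟩ ⟨by simp; omega, by simp; omega, hmem⟩
          simp at this; omega
        have hcn : c < n := by omega
        obtain ⟨x0, hx0⟩ := connSet_nonempty (hconn ⟨c, hcn⟩)
        have hrx0 : r ∉ S ⟨c, hcn⟩ := by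
          have := hnr 0 (by omega) (by omega); simpa using this
        obtain ⟨p0', hlen0, hF0⟩ := hroot c hcn hac' (by omega) x0 hx0
        have hrnex0 : r ≠ x0 := fun he => hrx0 (he ▸ hx0)
        obtain ⟨r', ha, q0, hq0path, hrq0, hq0len, hq0sub⟩ :=
          path_first_edge p0'.bypass p0'.bypass_isPath hrnex0
        have hq0F : ∀ v ∈ q0.support, v ∉ F :=
          fun v hv => hF0 v (p0'.support_bypass_subset (hq0sub v hv))
        have hq0len' : q0.length ≤ d' := by
          have := p0'.length_bypass_le.trans hlen0; omega
        have hAr'x0 : Avoid H r r' x0 := ⟨q0, hrq0⟩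
        -- all sets in the window lie in the branch of x0
        have hchain : ∀ (j : ℕ) (hj : c + j < n), j ≤ M → ∀ x ∈ S ⟨c + j, hj⟩,
            Avoid H r x x0 := by
          intro j
          induction j with
          | zero => exact fun hj _ x hx => avoid_of_conn (hconn ⟨c, hcn⟩) hrx0 hx hx0
          | succ j ihj =>
            intro hj hjM x hx
            have hj' : c + j < n := by omega
            obtain ⟨xs, ys, hxs, hys, hxys⟩ := hlink (c + j) hj
            have hrS1 : r ∉ S ⟨c + j + 1, hj⟩ := hnr (j + 1) hj hjM
            have hrS0 : r ∉ S ⟨c + j, hj'⟩ := hnr j hj' (by omega)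
            have h1 : Avoid H r x ys := avoid_of_conn (hconn ⟨c + j + 1, hj⟩) hrS1 hx hys
            have h2 : Avoid H r ys xs := avoid_of_reflAdj (reflAdj_symm hxys)
              (fun he => hrS1 (he ▸ hys)) (fun he => hrS0 (he ▸ hxs))
            exact (h1.trans h2).trans (ihj hj' (by omega) xs hxs)
        -- apply the inner induction hypothesis to the branch
        have hcontra := ihq (insert r F) r' c (c + M + 1) (by omega) (by omega) ?_
        · omega
        · intro i hi hci hicM x hx
          have hji : i = c + (i - c) := by omega
          have hrSi : r ∉ S ⟨i, hi⟩ := by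
            rw [show (⟨i, hi⟩ : Fin n) = ⟨c + (i - c), by omega⟩ from by simp; omega]
            exact hnr (i - c) (by omega) (by omega)
          obtain ⟨p', hlen', hF'⟩ := hroot i hi (by omega) (by omega) x hx
          have hrnex : r ≠ x := fun he => hrSi (he ▸ hx)
          obtain ⟨a0, ha0, q, hqpath, hrq, hqlen, hqsub⟩ :=
            path_first_edge p'.bypass p'.bypass_isPath hrnex
          have heq : a0 = r' := by
            refine unique_branch hac ha0 ha ?_
            have h1 : Avoid H r a0 x := ⟨q, hrq⟩
            have h2 : Avoid H r x x0 := by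
              have := hchain (i - c) (by omega) (by omega)
              rw [show (⟨i, hi⟩ : Fin n) = ⟨c + (i - c), by omega⟩ from by simp; omega] at hx
              exact this x hx
            exact (h1.trans h2).trans hAr'x0.symm
          subst heq
          refine ⟨q, by
              have := p'.length_bypass_le.trans hlen'; omega,
            fun v hv => ?_⟩
          simp only [Set.mem_insert_iff, not_or]
          exact ⟨fun he => hrq (he ▸ hv),
            hF' v (p'.support_bypass_subset (hqsub v hv))⟩
      -- counting via disjoint windows
      set K := (b - a) / (M + 1) with hK
      have hKle : K ≤ I.ncard := by
        have hg : ∀ k : Fin K, ∃ g ∈ I, a + k.val * (M + 1) ≤ g.val ∧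
            g.val ≤ a + k.val * (M + 1) + M := by
          intro k
          have hk1 : (k.val + 1) * (M + 1) ≤ K * (M + 1) :=
            Nat.mul_le_mul_right _ (by omega)
          have hKM : K * (M + 1) ≤ b - a := Nat.div_mul_le_self _ _
          have hwin : a + k.val * (M + 1) + M < b := by
            have : k.val * (M + 1) + (M + 1) ≤ b - a := by
              calc k.val * (M + 1) + (M + 1) = (k.val + 1) * (M + 1) := by ring
                _ ≤ K * (M + 1) := hk1
                _ ≤ b - a := hKM
            omega
          obtain ⟨g, hgI, h1, h2⟩ := W (a + k.val * (M + 1)) (by omega) hwin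
          exact ⟨g, hgI, h1, h2⟩
        choose f hfI hf1 hf2 using hg
        have key : ∀ k k' : Fin K, k.val < k'.val → (f k).val < (f k').val := by
          intro k k' hlt
          have h1 : k.val * (M + 1) + (M + 1) ≤ k'.val * (M + 1) := by
            calc k.val * (M + 1) + (M + 1) = (k.val + 1) * (M + 1) := by ring
              _ ≤ k'.val * (M + 1) := Nat.mul_le_mul_right _ (by omega)
          have := hf2 k; have := hf1 k'; omega
        have hinj : Function.Injective f := by
          intro k k' hkk
          rcases lt_trichotomy k.val k'.val with h | h | h
          · have := key _ _ h; rw [hkk] at this; omega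
          · exact Fin.val_injective h
          · have := key _ _ h; rw [hkk] at this; omega
        calc K = (Set.univ : Set (Fin K)).ncard := by
              rw [Set.ncard_univ, Nat.card_eq_fintype_card, Fintype.card_fin]
          _ = (f '' Set.univ).ncard := (Set.ncard_image_of_injective _ hinj).symm
          _ ≤ I.ncard := Set.ncard_le_ncard (by rintro g ⟨k, -, rfl⟩; exact hfI k)
            (Set.toFinite _)
      have hKw : K ≤ w := hKle.trans hIw
      have hmod : (b - a) % (M + 1) < M + 1 := Nat.mod_lt _ (by omega)
      have hba : b - a < (w + 1) * (M + 1) := by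
        calc b - a = (M + 1) * K + (b - a) % (M + 1) := (Nat.div_add_mod _ _).symm
          _ < (M + 1) * w + (M + 1) := by
            have := Nat.mul_le_mul_left (M + 1) hKw; omega
          _ = (w + 1) * (M + 1) := by ring
      have hfin : (w + 1) * (M + 1) ≤ (w + 2) ^ (d' + 1 + 1) + 1 := by
        have hpow : (w + 2) ^ (d' + 1 + 1) = (w + 2) * M := by rw [hM]; ring
        nlinarith
      omega
  -- set up the root and initial call
  have h0n : 0 < n := hn
  obtain ⟨x00, hx00⟩ := connSet_nonempty (hconn ⟨0, h0n⟩)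
  obtain ⟨r, hrreach, hrdist⟩ := hht x00
  have hreach : ∀ (i : ℕ) (hi : i < n), ∀ x ∈ S ⟨i, hi⟩, H.Reachable x x00 := by
    intro i
    induction i with
    | zero =>
      intro hi x hx
      obtain ⟨p, -⟩ := connSet_walk (hconn ⟨0, h0n⟩) hx hx00
      exact ⟨p⟩
    | succ i ihi =>
      intro hi x hx
      have hi' : i < n := by omega
      obtain ⟨xs, ys, hxs, hys, hxys⟩ := hlink i hi
      obtain ⟨p, -⟩ := connSet_walk (hconn ⟨i + 1, hi⟩) hx hys
      have h1 : H.Reachable x ys := ⟨p⟩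
      have h2 : H.Reachable ys xs := by
        rcases hxys with rfl | hadj
        · exact SimpleGraph.Reachable.refl _
        · exact hadj.symm.reachable
      exact (h1.trans h2).trans (ihi hi' xs hxs)
  have hfinal := Q d ∅ r 0 n (by omega) le_rfl ?_
  · omega
  · intro i hi _ _ x hx
    have hr : H.Reachable r x := hrreach.trans (hreach i hi x hx).symm
    obtain ⟨p, hp⟩ := hr.exists_walk_length_eq_dist
    exact ⟨p, hp ▸ hrdist x hr, by simp⟩

end Part3


section Part2a

lemma edge_first {β : Type} {H : SimpleGraph β} {u v : β} (p : H.Walk u v) (hp : ¬ p.Nil) :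
    s(u, p.getVert 1) ∈ p.edges := by
  cases p with
  | nil => simp at hp
  | cons ha q =>
    rw [SimpleGraph.Walk.getVert_cons_succ, SimpleGraph.Walk.getVert_zero]
    simp

lemma getVert_mem_support' {β : Type} {H : SimpleGraph β} {u v : β} (p : H.Walk u v) (i : ℕ) :
    p.getVert i ∈ p.support := by
  induction p generalizing i with
  | nil => simp [SimpleGraph.Walk.getVert]
  | cons ha q ih =>
    cases i with
    | zero => simp [SimpleGraph.Walk.getVert_zero]
    | succ i =>
      rw [SimpleGraph.Walk.getVert_cons_succ]
      simp only [SimpleGraph.Walk.support_cons, List.mem_cons]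
      exact Or.inr (ih i)

lemma acyclic_of_parent {α : Type} {G : SimpleGraph α} (par : α → α) (ρ : α → ℕ)
    (hpar : ∀ a b, G.Adj a b → (b = par a ∧ ρ b < ρ a) ∨ (a = par b ∧ ρ a < ρ b)) :
    G.IsAcyclic := by
  classical
  intro v c hc
  have hvmem : v ∈ c.support := c.start_mem_support
  obtain ⟨u, humem, humax⟩ := Finset.exists_max_image c.support.toFinset ρ
    ⟨v, List.mem_toFinset.mpr hvmem⟩
  rw [List.mem_toFinset] at humem
  have hc' := hc.rotate humem
  set c' := c.rotate u humem with hc'def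
  have hmax : ∀ x ∈ c'.support, ρ x ≤ ρ u := by
    intro x hx
    rw [SimpleGraph.Walk.support_eq_cons] at hx
    rcases List.mem_cons.mp hx with rfl | hx
    · exact le_rfl
    · refine humax x (List.mem_toFinset.mpr ?_)
      have hrot := SimpleGraph.Walk.support_rotate c u humem
      exact List.mem_of_mem_tail (hrot.mem_iff.mp hx)
  clear_value c'
  cases c' with
  | nil => exact hc'.not_of_nil
  | @cons _ b _ ha q =>
    rw [SimpleGraph.Walk.cons_isCycle_iff] at hc'
    obtain ⟨hqpath, hedge⟩ := hc'
    have hbu : b ≠ u := fun he => (SimpleGraph.irrefl G) (he ▸ ha)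
    have hqnil : ¬ q.reverse.Nil := SimpleGraph.Walk.not_nil_of_ne (Ne.symm hbu)
    set b' := q.reverse.getVert 1 with hb'
    have hadj' : G.Adj u b' := by
      have := q.reverse.adj_getVert_succ (i := 0) (SimpleGraph.Walk.not_nil_iff_lt_length.mp hqnil)
      simpa only [SimpleGraph.Walk.getVert_zero, zero_add] using this
    have hb'mem : b' ∈ q.support := by
      have : b' ∈ q.reverse.support := getVert_mem_support' _ _
      rwa [SimpleGraph.Walk.support_reverse, List.mem_reverse] at this
    have hbmem : b ∈ (SimpleGraph.Walk.cons ha q).support := by simp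
    have hb'mem2 : b' ∈ (SimpleGraph.Walk.cons ha q).support := by
      simp [SimpleGraph.Walk.support_cons, hb'mem]
    -- both neighbours of u are its parent
    have h1 : b = par u := by
      rcases hpar u b ha with ⟨h, -⟩ | ⟨-, hlt⟩
      · exact h
      · exact absurd (hmax b hbmem) (by omega)
    have h2 : b' = par u := by
      rcases hpar u b' hadj' with ⟨h, -⟩ | ⟨-, hlt⟩
      · exact h
      · exact absurd (hmax b' hb'mem2) (by omega)
    -- but then the first edge appears twice
    have hmm : s(u, b') ∈ q.edges := by
      have := edge_first q.reverse hqnil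
      rwa [SimpleGraph.Walk.edges_reverse, List.mem_reverse] at this
    rw [h2, ← h1] at hmm
    exact hedge hmm

lemma kAryTree_adj {h k : ℕ} {a b : {l : List (Fin k) // l.length ≤ h}} :
    (kAryTree h k).Adj a b ↔ a ≠ b ∧ ((∃ i : Fin k, b.1 = i :: a.1) ∨ ∃ i : Fin k, a.1 = i :: b.1) := by
  rw [kAryTree, SimpleGraph.fromRel_adj]

lemma kAryTree_isTree (h k : ℕ) : (kAryTree h k).IsTree := by
  constructor
  · -- connected
    have hroot : ∀ (l : List (Fin k)) (hl : l.length ≤ h),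
        (kAryTree h k).Reachable ⟨l, hl⟩ ⟨[], by simp⟩ := by
      intro l
      induction l with
      | nil => intro hl; rfl
      | cons i t ih =>
        intro hl
        have ht : t.length ≤ h := by simp at hl; omega
        have hadj : (kAryTree h k).Adj ⟨i :: t, hl⟩ ⟨t, ht⟩ := by
          rw [kAryTree_adj]
          refine ⟨fun he => ?_, Or.inr ⟨i, rfl⟩⟩
          · have := congrArg (fun x => x.1.length) he
            simp at this
        exact hadj.reachable.trans (ih ht)
    rw [SimpleGraph.connected_iff]
    exact ⟨fun x y => (hroot x.1 x.2).trans (hroot y.1 y.2).symm, ⟨⟨[], by simp⟩⟩⟩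
  · -- acyclic
    refine acyclic_of_parent (fun a => ⟨a.1.tail, le_trans (a.1.length_tail ▸ by omega) a.2⟩)
      (fun a => a.1.length) ?_
    intro a b hab
    rw [kAryTree_adj] at hab
    obtain ⟨hne, ⟨i, hi⟩ | ⟨i, hi⟩⟩ := hab
    · right
      constructor
      · apply Subtype.ext; simp [hi]
      · simp [hi]
    · left
      constructor
      · apply Subtype.ext; simp [hi]
      · simp [hi]

instance kAryFinite (h k : ℕ) : Finite {l : List (Fin k) // l.length ≤ h} :=
  (List.finite_length_le (Fin k) h).to_subtype

end Part2a


section Transport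

variable {α α' β β' : Type}

lemma connSet_image {H : SimpleGraph β} {H' : SimpleGraph β'} (ψ : H ≃g H') {s : Set β}
    (hc : ConnSet H s) : ConnSet H' (⇑ψ '' s) := by
  refine SimpleGraph.Connected.map
    ⟨fun x => ⟨ψ x.1, Set.mem_image_of_mem _ x.2⟩, fun {a b} hab => ψ.map_adj_iff.mpr hab⟩ ?_ hc
  rintro ⟨y, x, hx, rfl⟩
  exact ⟨⟨x, hx⟩, rfl⟩

lemma reflAdj_iso {G : SimpleGraph α} {G' : SimpleGraph α'} (φ : G ≃g G') {a b : α}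
    (h : reflAdj G a b) : reflAdj G' (φ a) (φ b) :=
  h.imp (congrArg φ) (fun ha => φ.map_adj_iff.mpr ha)

lemma decon_transport {G : SimpleGraph α} {G' : SimpleGraph α'}
    {H : SimpleGraph β} {H' : SimpleGraph β'} (φ : G ≃g G') (ψ : H ≃g H')
    {B : β → Set α} {w : ℕ} (hd : IsDeconstruction G H B) (hw : DeconWidthLE H B w) :
    IsDeconstruction G' H' (fun h' => ⇑φ '' B (ψ.symm h')) ∧
      DeconWidthLE H' (fun h' => ⇑φ '' B (ψ.symm h')) w := by
  have hmem : ∀ (g' : α') (s : Set α), g' ∈ ⇑φ '' s ↔ φ.symm g' ∈ s := by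
    intro g' s
    constructor
    · rintro ⟨x, hx, rfl⟩
      simpa using hx
    · intro hx
      exact ⟨φ.symm g', hx, by simp⟩
  refine ⟨⟨?_, ?_⟩, ?_⟩
  · intro g g' hgg
    have : reflAdj G (φ.symm g) (φ.symm g') := by
      have := reflAdj_iso φ.symm hgg
      exact this
    obtain ⟨h, h', hr, hg, hg'⟩ := hd.1 _ _ this
    refine ⟨ψ h, ψ h', reflAdj_iso ψ hr, ?_, ?_⟩
    · rcases hg with hg | hg
      · exact Set.mem_union_left _ ((hmem _ _).mpr (by simpa using hg))
      · exact Set.mem_union_right _ ((hmem _ _).mpr (by simpa using hg))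
    · rcases hg' with hg | hg
      · exact Set.mem_union_left _ ((hmem _ _).mpr (by simpa using hg))
      · exact Set.mem_union_right _ ((hmem _ _).mpr (by simpa using hg))
  · intro g'
    have hset : {h' | g' ∈ ⇑φ '' B (ψ.symm h')} = ⇑ψ '' {h | φ.symm g' ∈ B h} := by
      ext h'
      simp only [Set.mem_setOf_eq, hmem]
      constructor
      · intro hx
        exact ⟨ψ.symm h', hx, by simp⟩
      · rintro ⟨x, hx, rfl⟩
        simpa using hx
    rw [hset]
    exact connSet_image ψ (hd.2 (φ.symm g'))
  · intro h h' hr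
    have hr' : reflAdj H (ψ.symm h) (ψ.symm h') := by
      have := reflAdj_iso ψ.symm hr
      exact this
    have := hw _ _ hr'
    rw [← Set.image_union] at *
    calc (⇑φ '' (B (ψ.symm h) ∪ B (ψ.symm h'))).ncard
        = (B (ψ.symm h) ∪ B (ψ.symm h')).ncard :=
          Set.ncard_image_of_injective _ (φ.toEquiv.injective)
      _ ≤ w := this

end Transport


section Part2c

/-- Vertex type of the ternary tree of height `h`. -/
abbrev TernT (h : ℕ) : Type := {l : List (Fin 3) // l.length ≤ h}

lemma pathGraph_walk_ivt {m : ℕ} {x y : Fin m} (p : (SimpleGraph.pathGraph m).Walk x y) :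
    ∀ c : Fin m, x.val ≤ c.val → c.val ≤ y.val → c ∈ p.support := by
  induction p with
  | nil =>
    intro c h1 h2
    simp only [SimpleGraph.Walk.support_nil, List.mem_singleton]
    exact Fin.ext (le_antisymm h2 h1)
  | @cons x x1 y ha q ih =>
    intro c h1 h2
    by_cases hxceq : x = c
    · simp [hxceq.symm]
    · have hlt : x.val < c.val := lt_of_le_of_ne h1 (fun he => hxceq (Fin.ext he))
      rw [SimpleGraph.pathGraph_adj] at ha
      have hx1c : x1.val ≤ c.val := by omega
      simp only [SimpleGraph.Walk.support_cons, List.mem_cons]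
      exact Or.inr (ih c hx1c h2)

lemma median3 (t : Fin 3 → ℕ) : ∃ a b c : Fin 3, a ≠ b ∧ b ≠ c ∧ a ≠ c ∧
    t a ≤ t b ∧ t b ≤ t c := by
  rcases le_total (t 0) (t 1) with h01 | h01 <;>
    rcases le_total (t 1) (t 2) with h12 | h12 <;>
      rcases le_total (t 0) (t 2) with h02 | h02
  · exact ⟨0, 1, 2, by decide, by decide, by decide, h01, h12⟩
  · exact ⟨0, 1, 2, by decide, by decide, by decide, h01, h12⟩
  · exact ⟨0, 2, 1, by decide, by decide, by decide, h02, h12⟩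
  · exact ⟨2, 0, 1, by decide, by decide, by decide, h02, h01⟩
  · exact ⟨1, 0, 2, by decide, by decide, by decide, h01, h02⟩
  · exact ⟨1, 2, 0, by decide, by decide, by decide, h12, h02⟩
  · exact ⟨1, 2, 0, by decide, by decide, by decide, h01.trans h02, h12.trans h01⟩
  · exact ⟨2, 1, 0, by decide, by decide, by decide, h12, h01⟩

theorem path_decon_kary {h m w : ℕ} (hm : 2 ≤ m) (hh : 1 ≤ h)
    {B : Fin m → Set (TernT h)}
    (hd : IsDeconstruction (kAryTree h 3) (SimpleGraph.pathGraph m) B)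
    (hw : DeconWidthLE (SimpleGraph.pathGraph m) B w) : h ≤ w := by
  classical
  set S : TernT h → Set (Fin m) := fun g => {t | g ∈ B t} with hS
  have hconn : ∀ g, ConnSet (SimpleGraph.pathGraph m) (S g) := hd.2
  have hint : ∀ (g : TernT h) (x y c : Fin m), x ∈ S g → y ∈ S g → x.val ≤ c.val →
      c.val ≤ y.val → c ∈ S g := by
    intro g x y c hx hy hxc hcy
    obtain ⟨p, hp⟩ := connSet_walk (hconn g) hx hy
    exact hp c (pathGraph_walk_ivt p c hxc hcy)
  -- a set with a point ≤ t+1 and a point ≥ t has a point in [t, t+1]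
  have haux : ∀ (g : TernT h) (t : ℕ), (∃ x ∈ S g, x.val ≤ t + 1) → (∃ y ∈ S g, t ≤ y.val) →
      ∃ z ∈ S g, t ≤ z.val ∧ z.val ≤ t + 1 := by
    intro g t ⟨x, hx, hxt⟩ ⟨y, hy, hyt⟩
    by_cases hc : t ≤ x.val
    · exact ⟨x, hx, hc, hxt⟩
    · push_neg at hc
      have htm : t < m := lt_of_le_of_lt hyt y.isLt
      refine ⟨⟨t, htm⟩, hint g x y ⟨t, htm⟩ hx hy (by simpa using hc.le) (by simpa using hyt),
        le_rfl, Nat.le_succ t⟩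
  -- sweeping along a walk in the guest tree
  have hsweep : ∀ {g g' : TernT h} (p : (kAryTree h 3).Walk g g') (t : ℕ),
      (∃ x ∈ S g, x.val ≤ t + 1) → (∃ y ∈ S g', t ≤ y.val) →
      ∃ v ∈ p.support, ∃ z ∈ S v, t ≤ z.val ∧ z.val ≤ t + 1 := by
    intro g g' p
    induction p with
    | nil =>
      intro t hg hg'
      obtain ⟨z, hz, hz1, hz2⟩ := haux _ t hg hg'
      exact ⟨_, by simp, z, hz, hz1, hz2⟩
    | @cons ga g1 gb ha q ih =>
      intro t hg hg'
      obtain ⟨xa, yb, hxa, hyb, hab⟩ := close hd (Or.inr ha)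
      by_cases hc : t ≤ xa.val
      · obtain ⟨z, hz, hz1, hz2⟩ := haux ga t hg ⟨xa, hxa, hc⟩
        exact ⟨ga, by simp, z, hz, hz1, hz2⟩
      · push_neg at hc
        have hybt : yb.val ≤ t + 1 := by
          rcases hab with he | hadj
          · rw [← he]; omega
          · rw [SimpleGraph.pathGraph_adj] at hadj; omega
        obtain ⟨v, hv, hrest⟩ := ih t ⟨yb, hyb, hybt⟩ hg'
        exact ⟨v, by simp [SimpleGraph.Walk.support_cons, hv], hrest⟩
  -- walking down the tree to an ancestor
  have hwalkdown : ∀ (y : List (Fin 3)) (hy : y.length ≤ h) (l : TernT h) (hsuf : l.1 <:+ y),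
      ∃ p : (kAryTree h 3).Walk ⟨y, hy⟩ l, ∀ v ∈ p.support, l.1 <:+ v.1 ∧ v.1 <:+ y := by
    intro y
    induction y with
    | nil =>
      intro hy l hsuf
      have : l = ⟨[], hy⟩ := Subtype.ext (List.eq_nil_of_suffix_nil hsuf)
      subst this
      exact ⟨SimpleGraph.Walk.nil, by simp⟩
    | cons a tl ih =>
      intro hy l hsuf
      rcases List.suffix_cons_iff.mp hsuf with heq | hsuf'
      · have : l = ⟨a :: tl, hy⟩ := Subtype.ext heq
        subst this
        exact ⟨SimpleGraph.Walk.nil, by simp⟩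
      · have htl : tl.length ≤ h := by simp at hy; omega
        have hadj : (kAryTree h 3).Adj ⟨a :: tl, hy⟩ ⟨tl, htl⟩ := by
          rw [kAryTree_adj]
          refine ⟨fun he => ?_, Or.inr ⟨a, rfl⟩⟩
          have := congrArg (fun x => x.1.length) he
          simp at this
        obtain ⟨p, hp⟩ := ih htl l hsuf'
        refine ⟨SimpleGraph.Walk.cons hadj p, ?_⟩
        intro v hv
        rcases List.mem_cons.mp (by simpa [SimpleGraph.Walk.support_cons] using hv) with rfl | hv'
        · exact ⟨hsuf, List.suffix_rfl⟩
        · obtain ⟨h1, h2⟩ := hp v hv'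
          exact ⟨h1, h2.trans (List.suffix_cons a tl)⟩
  -- the active-count claim
  have hcount : ∀ (k : ℕ) (l : TernT h), 1 ≤ k → l.1.length + k ≤ h → ∃ t : ℕ, t + 1 < m ∧
      k ≤ {g : TernT h | l.1 <:+ g.1 ∧ ∃ z ∈ S g, z.val = t ∨ z.val = t + 1}.ncard := by
    intro k
    induction k with
    | zero => omega
    | succ k ihk =>
      intro l _ hlen
      by_cases hk0 : k = 0
      · -- base case : one active vertex
        subst hk0
        obtain ⟨x0, hx0⟩ := connSet_nonempty (hconn l)
        by_cases hxm : x0.val + 1 < m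
        · refine ⟨x0.val, hxm, ?_⟩
          have hmem : l ∈ {g : TernT h | l.1 <:+ g.1 ∧ ∃ z ∈ S g, z.val = x0.val ∨ z.val = x0.val + 1} :=
            ⟨List.suffix_rfl, x0, hx0, Or.inl rfl⟩
          have hpos := (Set.ncard_pos (Set.toFinite _)).mpr ⟨l, hmem⟩
          omega
        · have hx0m : x0.val = m - 1 := by have := x0.isLt; omega
          refine ⟨m - 2, by omega, ?_⟩
          have hmem : l ∈ {g : TernT h | l.1 <:+ g.1 ∧ ∃ z ∈ S g, z.val = m - 2 ∨ z.val = m - 2 + 1} :=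
            ⟨List.suffix_rfl, x0, hx0, Or.inr (by omega)⟩
          have hpos := (Set.ncard_pos (Set.toFinite _)).mpr ⟨l, hmem⟩
          omega
      · -- inductive step via three children
        have hk1 : 1 ≤ k := by omega
        have hchild : ∀ i : Fin 3, ((i :: l.1 : List (Fin 3))).length ≤ h := by
          intro i; simp; omega
        set c : Fin 3 → TernT h := fun i => ⟨i :: l.1, hchild i⟩ with hc
        have hlen' : ∀ i : Fin 3, (c i).1.length + k ≤ h := by intro i; simp [hc]; omega
        have hT := fun i : Fin 3 => ihk (c i) hk1 (hlen' i)
        choose tt htm hcnt using hT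
        obtain ⟨ia, ib, ic, hab, hbc, hac, h1, h2⟩ := median3 tt
        -- a vertex active near t_ia in the subtree of c ia
        have hga : ∃ g : TernT h, (c ia).1 <:+ g.1 ∧ ∃ z ∈ S g, z.val = tt ia ∨ z.val = tt ia + 1 := by
          have := hcnt ia
          have hne := Set.nonempty_of_ncard_ne_zero (s := {g : TernT h | (c ia).1 <:+ g.1 ∧
            ∃ z ∈ S g, z.val = tt ia ∨ z.val = tt ia + 1}) (by omega)
          exact hne
        have hgc : ∃ g : TernT h, (c ic).1 <:+ g.1 ∧ ∃ z ∈ S g, z.val = tt ic ∨ z.val = tt ic + 1 := by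
          have := hcnt ic
          have hne := Set.nonempty_of_ncard_ne_zero (s := {g : TernT h | (c ic).1 <:+ g.1 ∧
            ∃ z ∈ S g, z.val = tt ic ∨ z.val = tt ic + 1}) (by omega)
          exact hne
        obtain ⟨ga, hgaD, za, hza, hzav⟩ := hga
        obtain ⟨gc, hgcD, zc, hzc, hzcv⟩ := hgc
        have hdistinct : ∀ (i j : Fin 3) (g : TernT h), i ≠ j → (c i).1 <:+ g.1 →
            ¬ ((c j).1 <:+ g.1) := by
          intro i j g hij hi hj
          rcases List.suffix_or_suffix_of_suffix hi hj with h4 | h4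
          · have heq := List.IsSuffix.eq_of_length h4 (by simp [hc])
            simp only [hc, List.cons.injEq] at heq
            exact hij heq.1
          · have heq := List.IsSuffix.eq_of_length h4 (by simp [hc])
            simp only [hc, List.cons.injEq] at heq
            exact hij heq.1.symm
        have hsufa : l.1 <:+ ga.1 := (List.suffix_cons ia l.1).trans hgaD
        have hsufc : l.1 <:+ gc.1 := (List.suffix_cons ic l.1).trans hgcD
        obtain ⟨p1, hp1⟩ := hwalkdown ga.1 ga.2 l hsufa
        obtain ⟨p2, hp2⟩ := hwalkdown gc.1 gc.2 l hsufc
        obtain ⟨v, hvmem, z, hzS, hz1, hz2⟩ := hsweep (p1.append p2.reverse) (tt ib)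
          ⟨za, hza, by omega⟩ ⟨zc, hzc, by omega⟩
        have hvl : l.1 <:+ v.1 ∧ (v.1 <:+ ga.1 ∨ v.1 <:+ gc.1) := by
          rcases (SimpleGraph.Walk.mem_support_append_iff _ _).mp hvmem with hv | hv
          · obtain ⟨ha', hb'⟩ := hp1 v hv
            exact ⟨ha', Or.inl hb'⟩
          · rw [SimpleGraph.Walk.support_reverse, List.mem_reverse] at hv
            obtain ⟨ha', hb'⟩ := hp2 v hv
            exact ⟨ha', Or.inr hb'⟩
        have hvnotb : ¬ ((c ib).1 <:+ v.1) := by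
          intro hvb
          rcases hvl.2 with hv | hv
          · exact hdistinct ia ib ga hab hgaD (hvb.trans hv)
          · exact hdistinct ic ib gc (Ne.symm hbc) hgcD (hvb.trans hv)
        set Tb := {g : TernT h | (c ib).1 <:+ g.1 ∧ ∃ z ∈ S g,
          z.val = tt ib ∨ z.val = tt ib + 1} with hTb
        have hvT : v ∉ Tb := fun hv => hvnotb hv.1
        have hins : insert v Tb ⊆ {g : TernT h | l.1 <:+ g.1 ∧ ∃ z ∈ S g,
            z.val = tt ib ∨ z.val = tt ib + 1} := by
          rintro g (rfl | hg)
          · exact ⟨hvl.1, z, hzS, by omega⟩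
          · exact ⟨(List.suffix_cons ib l.1).trans hg.1, hg.2⟩
        refine ⟨tt ib, htm ib, ?_⟩
        calc k + 1 ≤ Tb.ncard + 1 := by
              have h5 := hcnt ib
              rw [← hTb] at h5
              omega
          _ = (insert v Tb).ncard := (Set.ncard_insert_of_notMem hvT (Set.toFinite _)).symm
          _ ≤ _ := Set.ncard_le_ncard hins (Set.toFinite _)
  -- conclude
  obtain ⟨t, htm', hcnt⟩ := hcount h ⟨[], by simp⟩ hh (by simp)
  have hadj : (SimpleGraph.pathGraph m).Adj ⟨t, by omega⟩ ⟨t + 1, by omega⟩ := by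
    rw [SimpleGraph.pathGraph_adj]
    left
    rfl
  have hsub : {g : TernT h | ([] : List (Fin 3)) <:+ g.1 ∧ ∃ z ∈ S g, z.val = t ∨ z.val = t + 1} ⊆
      B ⟨t, by omega⟩ ∪ B ⟨t + 1, by omega⟩ := by
    rintro g ⟨-, z, hz, hzv | hzv⟩
    · left
      have : z = ⟨t, by omega⟩ := Fin.ext hzv
      exact this ▸ hz
    · right
      have : z = ⟨t + 1, by omega⟩ := Fin.ext hzv
      exact this ▸ hz
  calc h ≤ ({g : TernT h | ([] : List (Fin 3)) <:+ g.1 ∧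
        ∃ z ∈ S g, z.val = t ∨ z.val = t + 1}).ncard := hcnt
    _ ≤ (B ⟨t, by omega⟩ ∪ B ⟨t + 1, by omega⟩).ncard :=
        Set.ncard_le_ncard hsub (Set.toFinite _)
    _ ≤ w := hw _ _ (Or.inr hadj)

end Part2c


section Glue

lemma isTree_of_iso {α β : Type} {G : SimpleGraph α} {G' : SimpleGraph β} (φ : G ≃g G')
    (h : G.IsTree) : G'.IsTree := by
  constructor
  · exact SimpleGraph.Connected.map φ.toHom φ.toEquiv.surjective h.isConnected
  · intro v c hc
    exact h.IsAcyclic (c.map φ.symm.toHom) (hc.map φ.symm.toEquiv.injective)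

end Glue



/-- (1) `ℒ ⋠ 𝒯`; (2) `𝒯 ⋠ 𝒫`; (3) `𝒫 ⋠ ℱ_d` for every `d ≥ 0`. -/
theorem top_hierarchy :
    ¬ DeconLE classL classT ∧
    ¬ DeconLE classT classP ∧
    (∀ d : ℕ, ¬ DeconLE classP (classFd d)) := by
  refine ⟨?_, ?_, ?_⟩
  · rintro ⟨w, hw⟩
    obtain ⟨H, hHT, B, hd, hwd⟩ := hw ⟨w + 1, ⊤⟩ (Set.mem_univ _)
    have := tree_decon_clique hHT hd hwd
    omega
  · rintro ⟨w, hw⟩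
    have hfin : Finite (TernT (w + 1)) := kAryFinite (w + 1) 3
    have : Fintype (TernT (w + 1)) := Fintype.ofFinite _
    set N := Fintype.card (TernT (w + 1)) with hN
    set e : Fin N ≃ TernT (w + 1) := (Fintype.equivFin _).symm with he
    set GG : SimpleGraph (Fin N) := (kAryTree (w + 1) 3).comap e with hGG
    have φ : GG ≃g kAryTree (w + 1) 3 := ⟨e, Iff.rfl⟩
    have hGT : GG.IsTree := isTree_of_iso φ.symm (kAryTree_isTree (w + 1) 3)
    obtain ⟨H, hHP, B, hd, hwd⟩ := hw ⟨N, GG⟩ hGT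
    obtain ⟨m, hm2, ⟨ψ⟩⟩ := hHP
    obtain ⟨hd', hwd'⟩ := decon_transport φ ψ hd hwd
    have := path_decon_kary hm2 (by omega) hd' hwd'
    omega
  · intro d
    rintro ⟨w, hw⟩
    set n := (w + 2) ^ (d + 1) + 1 with hn
    have hpos : 0 < (w + 2) ^ (d + 1) := Nat.pow_pos (by omega)
    obtain ⟨H, hHF, B, hd, hwd⟩ := hw ⟨n, SimpleGraph.pathGraph n⟩
      ⟨n, by omega, ⟨RelIso.refl _⟩⟩
    have := forest_decon_path hHF.1 hd hwd hHF.2 (by omega)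
    omega
end

section
/- For each d ≥ 0: (1) ℱ_d ⋠ 𝒯_d, and (2) 𝒯_{d+1} ⋠ ℱ_d. -/
open SimpleGraph

/-! ### Auxiliary development -/

namespace TDH

open SimpleGraph Walk

abbrev KV (h k : ℕ) := {l : List (Fin k) // l.length ≤ h}

instance KVfinite (h k : ℕ) : Finite (KV h k) :=
  (List.finite_length_le (α := Fin k) (n := h)).to_subtype

/-- the root of the k-ary tree -/
def kroot (h k : ℕ) : KV h k := ⟨[], by simp⟩

instance (h k : ℕ) : Nonempty (KV h k) := ⟨kroot h k⟩

lemma kAry_adj {h k : ℕ} {a b : KV h k} :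
    (kAryTree h k).Adj a b ↔ a ≠ b ∧ ((∃ i, b.1 = i :: a.1) ∨ (∃ i, a.1 = i :: b.1)) := by
  simp [kAryTree, fromRel_adj]

/-- `k` disjoint copies of a graph. -/
def copies (k : ℕ) {α : Type} (G : SimpleGraph α) : SimpleGraph (Fin k × α) where
  Adj p q := p.1 = q.1 ∧ G.Adj p.2 q.2
  symm := ⟨by rintro p q ⟨h1, h2⟩; exact ⟨h1.symm, h2.symm⟩⟩
  loopless := ⟨by rintro p ⟨-, h⟩; exact G.ne_of_adj h rfl⟩

lemma copies_adj {k : ℕ} {α : Type} {G : SimpleGraph α} {p q : Fin k × α} :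
    (copies k G).Adj p q ↔ p.1 = q.1 ∧ G.Adj p.2 q.2 := Iff.rfl

/-- A walk from the root to any vertex, of length the vertex' list length. -/
lemma kAry_walk_from_root {h k : ℕ} (v : KV h k) :
    ∃ W : (kAryTree h k).Walk (kroot h k) v, W.length = v.1.length := by
  obtain ⟨l, hl⟩ := v
  induction l with
  | nil =>
      refine ⟨Walk.nil.copy rfl ?_, ?_⟩
      exacts [rfl, rfl]
  | cons i t ih =>
      have ht : t.length ≤ h := le_trans (by simp) hl
      obtain ⟨W, hW⟩ := ih ht
      have hadj : (kAryTree h k).Adj ⟨t, ht⟩ ⟨i :: t, hl⟩ := by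
        rw [kAry_adj]
        constructor
        · intro hc
          have := congrArg (fun x => x.1.length) hc
          simp at this
        · exact Or.inl ⟨i, rfl⟩
      exact ⟨W.concat hadj, by simp [hW]⟩

lemma kAry_preconnected (h k : ℕ) : (kAryTree h k).Preconnected := by
  intro u v
  obtain ⟨Wu, -⟩ := kAry_walk_from_root u
  obtain ⟨Wv, -⟩ := kAry_walk_from_root v
  exact (Wu.reverse.append Wv).reachable

lemma kAry_connected (h k : ℕ) : (kAryTree h k).Connected :=
  Connected.mk (kAry_preconnected h k)

lemma kAry_acyclic (h k : ℕ) : (kAryTree h k).IsAcyclic := by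
  intro v c hc
  classical
  -- pick a vertex of maximal list length on the cycle
  obtain ⟨u, hu_mem, hu_max⟩ := Finset.exists_max_image c.support.toFinset
    (fun x => x.1.length) ⟨v, by simp⟩
  rw [List.mem_toFinset] at hu_mem
  have hmax : ∀ z ∈ c.support, z.1.length ≤ u.1.length := by
    intro z hz; exact hu_max z (by simpa using hz)
  set c' := c.rotate u hu_mem with hc'def
  have hc' : c'.IsCycle := hc.rotate _
  have hsupp : ∀ z ∈ c'.support, z.1.length ≤ u.1.length := by
    intro z hz
    rw [hc'def, Walk.rotate, Walk.support_append] at hz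
    rcases List.mem_append.mp hz with h1 | h1
    · exact hmax z (c.support_dropUntil_subset hu_mem h1)
    · exact hmax z (c.support_takeUntil_subset hu_mem (List.mem_of_mem_tail h1))
  -- unique down-neighbor property
  have huniq : ∀ z : KV h k, (kAryTree h k).Adj u z → z.1.length ≤ u.1.length →
      z.1 = u.1.tail := by
    intro z hadj hlen
    rw [kAry_adj] at hadj
    rcases hadj.2 with ⟨i, hi⟩ | ⟨i, hi⟩
    · exfalso; rw [hi] at hlen; simp at hlen
    · rw [hi]; rfl
  -- decompose the cycle
  have hnil : ¬ c'.Nil := hc'.not_nil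
  have hcons := (c'.cons_tail_eq hnil).symm
  set a := c'.getVert 1 with ha
  set q := c'.tail with hq
  have hadj_ua : (kAryTree h k).Adj u a := by
    have := c'.adj_getVert_succ (i := 0) (by
      have h3 := hc'.three_le_length; omega)
    simpa using this
  have haneu : u ≠ a := (kAryTree h k).ne_of_adj hadj_ua
  -- reverse of the tail
  obtain ⟨z, hadj_uz, r', hr'⟩ := Walk.exists_eq_cons_of_ne haneu q.reverse
  have hz_mem : z ∈ c'.support := by
    have h1 : z ∈ q.reverse.support := by rw [hr']; simp
    rw [Walk.support_reverse, List.mem_reverse] at h1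
    have h2 : z ∈ c'.support.tail := by
      rw [← c'.support_tail_of_not_nil hnil]; exact h1
    exact List.mem_of_mem_tail h2
  have hz_eq : z = a := by
    have h1 := huniq z hadj_uz (hsupp z hz_mem)
    have h2 := huniq a hadj_ua (hsupp a (by
      rw [hcons]; simp; exact Or.inr q.start_mem_support))
    exact Subtype.ext (h1.trans h2.symm)
  -- the edge s(u,a) appears twice
  have hedge_mem : s(u, a) ∈ q.edges := by
    have h1 : s(u, z) ∈ q.reverse.edges := by
      rw [hr', Walk.edges_cons]; exact List.mem_cons_self
    rw [hz_eq] at h1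
    rwa [Walk.edges_reverse, List.mem_reverse] at h1
  have hnodup : c'.edges.Nodup := hc'.edges_nodup
  rw [hcons, Walk.edges_cons] at hnodup
  exact (List.nodup_cons.mp hnodup).1 hedge_mem

end TDH
namespace TDH

open SimpleGraph Walk

variable {α β γ : Type}

lemma reflAdj_mono {H H' : SimpleGraph β} (hle : H ≤ H') {a b : β} :
    reflAdj H a b → reflAdj H' a b := by
  rintro (rfl | h)
  · exact Or.inl rfl
  · exact Or.inr (hle h)

lemma iso_dist {G : SimpleGraph α} {G' : SimpleGraph β} (φ : G ≃g G') (a b : α) :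
    G'.dist (φ a) (φ b) = G.dist a b := by
  have key : ∀ {α' β' : Type} (G₁ : SimpleGraph α') (G₂ : SimpleGraph β')
      (ψ : G₁ ≃g G₂) (x y : α'), G₂.dist (ψ x) (ψ y) ≤ G₁.dist x y := by
    intro α' β' G₁ G₂ ψ x y
    by_cases hr : G₁.Reachable x y
    · obtain ⟨W, hW⟩ := hr.exists_walk_length_eq_dist
      calc G₂.dist (ψ x) (ψ y) ≤ (W.map ψ.toHom).length := dist_le _
      _ = G₁.dist x y := by rw [Walk.length_map, hW]
    · have h2 : ¬ G₂.Reachable (ψ x) (ψ y) := fun hr' => hr (Iso.reachable_iff.mp hr')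
      rw [dist_eq_zero_of_not_reachable hr, dist_eq_zero_of_not_reachable h2]
  refine le_antisymm (key G G' φ a b) ?_
  have := key G' G φ.symm (φ a) (φ b)
  simpa using this

/-- members of a connected set are mutually reachable. -/
lemma ConnSet.reachable {H : SimpleGraph β} {s : Set β} (hs : ConnSet H s)
    {x y : β} (hx : x ∈ s) (hy : y ∈ s) : H.Reachable x y := by
  have h := hs.preconnected ⟨x, hx⟩ ⟨y, hy⟩
  have := h.map (SimpleGraph.Embedding.induce s (G := H)).toHom
  simpa using this

lemma ConnSet.nonempty {H : SimpleGraph β} {s : Set β} (hs : ConnSet H s) :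
    ∃ x, x ∈ s := by
  obtain ⟨⟨x, hx⟩⟩ := hs.nonempty
  exact ⟨x, hx⟩

/-- a walk whose support lies in `s` gives a walk in the induced graph. -/
lemma exists_induce_walk {H : SimpleGraph β} {s : Set β} :
    ∀ {x y : β} (W : H.Walk x y) (_ : ∀ z ∈ W.support, z ∈ s)
      (hx : x ∈ s) (hy : y ∈ s),
      ∃ W' : (H.induce s).Walk ⟨x, hx⟩ ⟨y, hy⟩, W'.length = W.length := by
  intro x y W
  induction W with
  | nil => intro _ hx hy; exact ⟨Walk.nil, rfl⟩
  | @cons x z y hadj W ih =>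
      intro hsup hx hy
      have hz : z ∈ s := hsup z (by simp)
      obtain ⟨W', hW'⟩ := ih (fun u hu => hsup u (by simp [hu])) hz hy
      have hadj' : (H.induce s).Adj ⟨x, hx⟩ ⟨z, hz⟩ := hadj
      exact ⟨Walk.cons hadj' W', by simp [hW']⟩

/-- in a tree, every path between two vertices has length equal to the distance. -/
lemma IsTree.path_length_eq_dist {H : SimpleGraph β} (hT : H.IsTree)
    {x y : β} (p : H.Walk x y) (hp : p.IsPath) : p.length = H.dist x y := by
  classical
  obtain ⟨W, hW⟩ := (hT.isConnected x y).exists_walk_length_eq_dist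
  have huniq := hT.existsUnique_path x y
  have h1 : p = W.bypass := (huniq.unique hp W.bypass_isPath)
  have h3 : p.length = W.bypass.length := congrArg Walk.length h1
  have h4 := W.length_bypass_le
  have h2 : H.dist x y ≤ p.length := dist_le p
  omega

end TDH
namespace TDH

open SimpleGraph Walk

variable {α β : Type}

/-- no `H`-deconstruction of width `≤ w` with host satisfying `P`. -/
def NoDecon (G : SimpleGraph α) (P : ∀ m : ℕ, SimpleGraph (Fin m) → Prop) (w : ℕ) : Prop :=
  ∀ (m : ℕ) (H : SimpleGraph (Fin m)), P m H → ∀ B : Fin m → Set α,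
    IsDeconstruction G H B → ¬ DeconWidthLE H B w

def HostT (d m : ℕ) (H : SimpleGraph (Fin m)) : Prop :=
  H.IsTree ∧ treeHeightLE ⟨m, H⟩ d

def HostF (d m : ℕ) (H : SimpleGraph (Fin m)) : Prop :=
  H.IsAcyclic ∧ forestHeightLE ⟨m, H⟩ d

lemma reflAdj_of_iso {G : SimpleGraph α} {G₂ : SimpleGraph β} (φ : G ≃g G₂) {a b : α} :
    reflAdj G a b → reflAdj G₂ (φ a) (φ b) := by
  rintro (rfl | h)
  · exact Or.inl rfl
  · exact Or.inr (φ.map_adj_iff.mpr h)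

lemma NoDecon.of_iso {G : SimpleGraph α} {G₂ : SimpleGraph β} (φ : G ≃g G₂)
    {P : ∀ m : ℕ, SimpleGraph (Fin m) → Prop} {w : ℕ}
    (hG : NoDecon G P w) : NoDecon G₂ P w := by
  intro m H hP B hdec hwid
  refine hG m H hP (fun h => (⇑φ) ⁻¹' (B h)) ⟨?_, ?_⟩ ?_
  · intro g g' hrefl
    obtain ⟨h, h', hr, hm, hm'⟩ := hdec.1 (φ g) (φ g') (reflAdj_of_iso φ hrefl)
    exact ⟨h, h', hr, hm, hm'⟩
  · intro g
    exact hdec.2 (φ g)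
  · intro h h' hr
    have he : (fun x => (⇑φ) ⁻¹' (B x)) h ∪ (fun x => (⇑φ) ⁻¹' (B x)) h'
        = ⇑φ.toEquiv ⁻¹' (B h ∪ B h') := by
      simp [Set.preimage_union]
    rw [he, ← Equiv.image_symm_eq_preimage, Set.ncard_image_of_injective _
      φ.toEquiv.symm.injective]
    exact hwid h h' hr

lemma exists_fin_iso (G : SimpleGraph α) [Finite α] :
    ∃ (n : ℕ) (G' : SimpleGraph (Fin n)), Nonempty (G' ≃g G) := by
  obtain ⟨n, ⟨e⟩⟩ := Finite.exists_equiv_fin α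
  exact ⟨n, _, ⟨SimpleGraph.Iso.comap e.symm G⟩⟩

lemma isAcyclic_of_iso {G' : SimpleGraph α} {F : SimpleGraph β}
    (φ : G' ≃g F) (hAc : F.IsAcyclic) : G'.IsAcyclic := by
  intro v c hc
  have hinj : Function.Injective ⇑φ.toHom := φ.injective
  exact hAc _ ((Walk.map_isCycle_iff_of_injective hinj).mpr hc)

lemma classFd_of_iso {d n : ℕ} {G' : SimpleGraph (Fin n)} {F : SimpleGraph α}
    (φ : G' ≃g F) (hAc : F.IsAcyclic)
    (hH : ∀ v : α, ∃ r : α, F.Reachable r v ∧ ∀ u : α, F.Reachable r u → F.dist r u ≤ d) :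
    (⟨n, G'⟩ : FinGraph) ∈ classFd d := by
  refine ⟨isAcyclic_of_iso φ hAc, ?_⟩
  intro v
  obtain ⟨r, hr1, hr2⟩ := hH (φ v)
  refine ⟨φ.symm r, ?_, ?_⟩
  · rw [Iso.symm_apply_reachable]
    simpa using hr1
  · intro u hu
    rw [Iso.symm_apply_reachable] at hu
    have h1 := hr2 (φ u) hu
    have h2 := iso_dist φ (φ.symm r) u
    simp only [RelIso.apply_symm_apply] at h2
    show G'.dist (φ.symm r) u ≤ d
    omega

lemma classTd_of_iso {d n : ℕ} {G' : SimpleGraph (Fin n)} {T : SimpleGraph α}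
    (φ : G' ≃g T) (hT : T.IsTree)
    (hH : ∃ r : α, ∀ v : α, T.dist r v ≤ d) :
    (⟨n, G'⟩ : FinGraph) ∈ classTd d := by
  constructor
  · constructor
    · exact (Iso.connected_iff φ).mpr hT.isConnected
    · exact isAcyclic_of_iso φ hT.2
  · obtain ⟨r, hr⟩ := hH
    refine ⟨φ.symm r, fun v => ?_⟩
    have h1 := hr (φ v)
    have h2 := iso_dist φ (φ.symm r) v
    simp only [RelIso.apply_symm_apply] at h2
    show G'.dist (φ.symm r) v ≤ d
    omega

end TDH
namespace TDH

open SimpleGraph Walk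

variable {α β γ : Type}

lemma list_snoc_cons {b a : List γ} {j i l : γ} :
    b ++ [j] = i :: (a ++ [l]) ↔ b = i :: a ∧ j = l := by
  constructor
  · intro h
    cases b with
    | nil =>
        exfalso
        have := congrArg List.length h
        simp at this
    | cons x b' =>
        simp only [List.cons_append, List.cons.injEq] at h
        obtain ⟨rfl, h2⟩ := h
        obtain ⟨rfl, h3⟩ := List.append_inj' h2 rfl
        have : j = l := by simpa using h3
        exact ⟨rfl, this⟩
  · rintro ⟨rfl, rfl⟩
    simp

/-- embedding of `k` copies of `T_{d,k}` into `T_{d+1,k}` as the branches. -/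
def iota {d k : ℕ} (p : Fin k × KV d k) : KV (d + 1) k :=
  ⟨p.2.1 ++ [p.1], by simpa using Nat.add_le_add_right p.2.2 1⟩

lemma iota_inj {d k : ℕ} : Function.Injective (iota (d := d) (k := k)) := by
  rintro ⟨i, a⟩ ⟨j, b⟩ h
  simp only [iota, Subtype.mk.injEq] at h
  have h2 := congrArg List.reverse h
  simp only [List.reverse_append, List.reverse_cons, List.reverse_nil, List.nil_append,
    List.singleton_append, List.cons.injEq] at h2
  obtain ⟨rfl, h3⟩ := h2
  have : a.1 = b.1 := by
    have := congrArg List.reverse h3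
    simpa using this
  simp [Prod.ext_iff, Subtype.ext_iff, this]

lemma iota_adj {d k : ℕ} {p q : Fin k × KV d k} :
    (copies k (kAryTree d k)).Adj p q ↔ (kAryTree (d + 1) k).Adj (iota p) (iota q) := by
  obtain ⟨i, a⟩ := p
  obtain ⟨j, b⟩ := q
  rw [copies_adj, kAry_adj, kAry_adj]
  simp only [iota]
  constructor
  · rintro ⟨rfl, hne, hrel⟩
    refine ⟨?_, ?_⟩
    · intro hcon
      rw [Subtype.mk.injEq] at hcon
      have : a = b := by
        apply Subtype.ext
        exact (List.append_inj' hcon rfl).1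
      exact hne (by simp [this])
    · rcases hrel with ⟨x, hx⟩ | ⟨x, hx⟩
      · exact Or.inl ⟨x, by simp [hx]⟩
      · exact Or.inr ⟨x, by simp [hx]⟩
  · rintro ⟨hne, hrel⟩
    rcases hrel with ⟨x, hx⟩ | ⟨x, hx⟩
    · rw [list_snoc_cons] at hx
      obtain ⟨hb, rfl⟩ := hx
      refine ⟨rfl, ?_, Or.inl ⟨x, hb⟩⟩
      intro hcon
      rw [hcon] at hb
      exact List.cons_ne_self x b.1 hb.symm
    · rw [list_snoc_cons] at hx
      obtain ⟨ha, rfl⟩ := hx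
      refine ⟨rfl, ?_, Or.inr ⟨x, ha⟩⟩
      intro hcon
      rw [hcon] at ha
      exact List.cons_ne_self x b.1 ha.symm

/-- `iota` as a graph embedding. -/
def iotaEmb (d k : ℕ) : copies k (kAryTree d k) ↪g kAryTree (d + 1) k where
  toFun := iota
  inj' := iota_inj
  map_rel_iff' := iota_adj.symm

lemma copies_acyclic (d k : ℕ) : (copies k (kAryTree d k)).IsAcyclic := by
  intro v c hc
  have hinj : Function.Injective ⇑(iotaEmb d k).toHom := (iotaEmb d k).injective
  exact kAry_acyclic (d + 1) k _ ((Walk.map_isCycle_iff_of_injective hinj).mpr hc)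

/-- homomorphism placing `T_{d,k}` as the `i`-th copy. -/
def copyHom (d k : ℕ) (i : Fin k) : kAryTree d k →g copies k (kAryTree d k) where
  toFun a := (i, a)
  map_rel' h := ⟨rfl, h⟩

lemma copies_reachable_fst {k : ℕ} {G : SimpleGraph α} {p q : Fin k × α}
    (h : (copies k G).Reachable p q) : p.1 = q.1 := by
  obtain ⟨W⟩ := h
  induction W with
  | nil => rfl
  | cons hadj W ih => exact hadj.1.trans ih

lemma copies_heights (d k : ℕ) (v : Fin k × KV d k) :
    ∃ r, (copies k (kAryTree d k)).Reachable r v ∧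
      ∀ u, (copies k (kAryTree d k)).Reachable r u → (copies k (kAryTree d k)).dist r u ≤ d := by
  refine ⟨(v.1, kroot d k), ?_, ?_⟩
  · obtain ⟨W, -⟩ := kAry_walk_from_root v.2
    exact ⟨(W.map (copyHom d k v.1)).copy rfl rfl⟩
  · intro u hu
    have hfst' := copies_reachable_fst hu
    have hfst : v.1 = u.1 := hfst'
    obtain ⟨W, hW⟩ := kAry_walk_from_root u.2
    have hdist := dist_le ((W.map (copyHom d k v.1)).copy rfl (by rw [hfst]))
    rw [Walk.length_copy, Walk.length_map, hW] at hdist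
    exact le_trans hdist u.2.2

lemma kAry_dist_root (h k : ℕ) (v : KV h k) : (kAryTree h k).dist (kroot h k) v ≤ h := by
  obtain ⟨W, hW⟩ := kAry_walk_from_root v
  have := dist_le W
  rw [hW] at this
  exact le_trans this v.2

lemma kAry_isTree (h k : ℕ) : (kAryTree h k).IsTree :=
  ⟨kAry_connected h k, kAry_acyclic h k⟩

end TDH
namespace TDH

open SimpleGraph Walk

variable {α β : Type}

lemma supp_nonempty {G : SimpleGraph α} {m : ℕ} {H : SimpleGraph (Fin m)}
    {B : Fin m → Set α} (hdec : IsDeconstruction G H B) (g : α) : ∃ h, g ∈ B h :=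
  ConnSet.nonempty (hdec.2 g)

lemma base_case (w : ℕ) : NoDecon (copies (w + 1) (kAryTree 0 (w + 1))) (HostT 0) w := by
  intro m H hHost B hdec hwid
  obtain ⟨hTree, hHt⟩ := hHost
  obtain ⟨r, hr⟩ := hHt
  have hall : ∀ v : Fin m, r = v := by
    intro v
    exact (hTree.isConnected.dist_eq_zero_iff).mp (Nat.le_zero.mp (hr v))
  have hsub : ∀ p : Fin (w + 1) × KV 0 (w + 1), p ∈ B r := by
    intro p
    obtain ⟨h, hh⟩ := supp_nonempty hdec p
    rwa [← hall h] at hh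
  have hinj : Function.Injective
      (fun i : Fin (w + 1) => ((i, kroot 0 (w + 1)) : Fin (w + 1) × KV 0 (w + 1))) := by
    intro i j hij
    exact congrArg Prod.fst hij
  have hrange : Set.range (fun i : Fin (w + 1) => ((i, kroot 0 (w + 1)) :
      Fin (w + 1) × KV 0 (w + 1))) ⊆ B r := by
    rintro p ⟨j, rfl⟩
    exact hsub _
  have hcard : (w + 1 : ℕ) ≤ (B r).ncard := by
    have h2 := Set.ncard_le_ncard hrange (B r).toFinite
    rwa [← Set.image_univ, Set.ncard_image_of_injective _ hinj, Set.ncard_univ,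
      Nat.card_eq_fintype_card, Fintype.card_fin] at h2
  have hw := hwid r r (Or.inl rfl)
  rw [Set.union_self] at hw
  omega

lemma stepA {d w : ℕ}
    (hF : NoDecon (kAryTree (d + 1) (w + 1)) (HostF d) w) :
    NoDecon (copies (w + 1) (kAryTree (d + 1) (w + 1))) (HostT (d + 1)) w := by
  intro m H hHost B hdec hwid
  obtain ⟨hTree, hHt⟩ := hHost
  obtain ⟨r, hr⟩ := hHt
  -- there is a copy untouched by the root bag
  have hBrcard : (B r).ncard ≤ w := by
    have := hwid r r (Or.inl rfl); rwa [Set.union_self] at this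
  have huntouched : ∃ i : Fin (w + 1), ∀ a : KV (d + 1) (w + 1), (i, a) ∉ B r := by
    by_contra hcon
    push_neg at hcon
    choose f hf using hcon
    have hinj : Function.Injective
        (fun i : Fin (w + 1) => ((i, f i) : Fin (w + 1) × KV (d + 1) (w + 1))) := by
      intro i j hij; exact congrArg Prod.fst hij
    have hsub : Set.range (fun i : Fin (w + 1) =>
        ((i, f i) : Fin (w + 1) × KV (d + 1) (w + 1))) ⊆ B r := by
      rintro p ⟨j, rfl⟩; exact hf j
    have h2 := Set.ncard_le_ncard hsub (B r).toFinite
    rw [← Set.image_univ, Set.ncard_image_of_injective _ hinj, Set.ncard_univ,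
      Nat.card_eq_fintype_card, Fintype.card_fin] at h2
    omega
  obtain ⟨i, hi⟩ := huntouched
  -- `H'` is `H` with the root `r` isolated
  let H' : SimpleGraph (Fin m) :=
    { Adj := fun x y => H.Adj x y ∧ x ≠ r ∧ y ≠ r
      symm := ⟨fun x y h => ⟨h.1.symm, h.2.2, h.2.1⟩⟩
      loopless := ⟨fun x h => H.ne_of_adj h.1 rfl⟩ }
  have hle : H' ≤ H := fun x y h => h.1
  have havoid : ∀ {x y : Fin m} (W : H'.Walk x y), x ≠ r → r ∉ W.support := by
    intro x y W
    induction W with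
    | nil =>
        intro hx
        simp only [Walk.support_nil, List.mem_singleton]
        exact fun h => hx h.symm
    | cons hadj W ih =>
        intro hx
        simp only [Walk.support_cons, List.mem_cons]
        push_neg
        exact ⟨fun h => hx h.symm, ih hadj.2.2⟩
  have hH'acyc : H'.IsAcyclic := by
    intro v c hc
    have hsub : ∀ e ∈ c.edges, e ∈ H.edgeSet := fun e he =>
      SimpleGraph.edgeSet_mono hle (c.edges_subset_edgeSet he)
    exact hTree.2 _ (hc.transfer hsub)
  have hH'h : forestHeightLE ⟨m, H'⟩ d := by
    intro v
    by_cases hv : v = r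
    · refine ⟨r, by rw [hv], ?_⟩
      intro u hu
      obtain ⟨W⟩ := hu
      cases W with
      | nil => simp [SimpleGraph.dist_self]
      | cons hadj W => exact absurd rfl hadj.2.1
    · obtain ⟨p0⟩ := hTree.isConnected r v
      obtain ⟨p, hpath⟩ := p0.toPath
      have hnil : ¬ p.Nil := Walk.not_nil_of_ne (fun h => hv h.symm)
      have hadj_rc : H.Adj r (p.getVert 1) := p.adj_snd hnil
      have hcne : p.getVert 1 ≠ r := (H.ne_of_adj hadj_rc).symm
      have hr_tail : r ∉ p.tail.support := by
        have h1 : p.support.Nodup := hpath.support_nodup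
        rw [← p.cons_support_tail hnil] at h1
        exact (List.nodup_cons.mp h1).1
      have hedges : ∀ e ∈ p.tail.edges, e ∈ H'.edgeSet := by
        intro e he
        induction e with
        | h a b =>
            have hadj : H.Adj a b := p.tail.adj_of_mem_edges he
            have ha : a ∈ p.tail.support := p.tail.fst_mem_support_of_mem_edges he
            have hb : b ∈ p.tail.support := p.tail.snd_mem_support_of_mem_edges he
            exact ⟨hadj, fun h => hr_tail (h ▸ ha), fun h => hr_tail (h ▸ hb)⟩
      refine ⟨p.getVert 1, ⟨p.tail.transfer H' hedges⟩, ?_⟩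
      intro u hu
      obtain ⟨q0⟩ := hu
      obtain ⟨q, hqpath⟩ := q0.toPath
      have hqr : r ∉ q.support := havoid q hcne
      have hqedges : ∀ e ∈ q.edges, e ∈ H.edgeSet := fun e he =>
        SimpleGraph.edgeSet_mono hle (q.edges_subset_edgeSet he)
      have hqH : (q.transfer H hqedges).IsPath := hqpath.transfer hqedges
      have hP : (Walk.cons hadj_rc (q.transfer H hqedges)).IsPath := by
        apply hqH.cons
        rw [Walk.support_transfer]
        exact hqr
      have hlen := IsTree.path_length_eq_dist hTree _ hP
      rw [Walk.length_cons, Walk.length_transfer] at hlen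
      have hbound : H.dist r u ≤ d + 1 := hr u
      have hdle : H'.dist (p.getVert 1) u ≤ q.length := SimpleGraph.dist_le q
      show H'.dist (p.getVert 1) u ≤ d
      omega
  -- the restricted bags on copy `i`
  have hcov : ∀ a a' : KV (d + 1) (w + 1), reflAdj (kAryTree (d + 1) (w + 1)) a a' →
      ∃ h h', reflAdj H' h h' ∧
        a ∈ {x | (i, x) ∈ B h} ∪ {x | (i, x) ∈ B h'} ∧
        a' ∈ {x | (i, x) ∈ B h} ∪ {x | (i, x) ∈ B h'} := by
    intro a a' hrefl
    have hrefl2 : reflAdj (copies (w + 1) (kAryTree (d + 1) (w + 1))) (i, a) (i, a') := by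
      rcases hrefl with rfl | hadj
      · exact Or.inl rfl
      · exact Or.inr ⟨rfl, hadj⟩
    obtain ⟨h, h', hr2, hm, hm'⟩ := hdec.1 _ _ hrefl2
    rcases hr2 with rfl | hadj2
    · rw [Set.union_self] at hm hm'
      exact ⟨h, h, Or.inl rfl, Or.inl hm, Or.inl hm'⟩
    · by_cases hhr : h = r
      · subst hhr
        have hm2 : (i, a) ∈ B h' := hm.resolve_left (hi a)
        have hm2' : (i, a') ∈ B h' := hm'.resolve_left (hi a')
        exact ⟨h', h', Or.inl rfl, Or.inl hm2, Or.inl hm2'⟩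
      · by_cases hh'r : h' = r
        · subst hh'r
          have hm2 : (i, a) ∈ B h := hm.resolve_right (hi a)
          have hm2' : (i, a') ∈ B h := hm'.resolve_right (hi a')
          exact ⟨h, h, Or.inl rfl, Or.inl hm2, Or.inl hm2'⟩
        · exact ⟨h, h', Or.inr ⟨hadj2, hhr, hh'r⟩, hm, hm'⟩
  have hconn : ∀ a : KV (d + 1) (w + 1), ConnSet H' {h | a ∈ {x | (i, x) ∈ B h}} := by
    intro a
    have hc := hdec.2 (i, a)
    have hgr : H'.induce {h | (i, a) ∈ B h} = H.induce {h | (i, a) ∈ B h} := by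
      ext x y
      constructor
      · rintro ⟨h1, -, -⟩
        exact h1
      · intro h1
        exact ⟨h1, fun hc2 => hi a (by rw [← hc2]; exact x.2),
          fun hc2 => hi a (by rw [← hc2]; exact y.2)⟩
    show (H'.induce {h | (i, a) ∈ B h}).Connected
    rw [hgr]
    exact hc
  have hwid' : DeconWidthLE H' (fun h => {x | (i, x) ∈ B h}) w := by
    intro h h' hr2
    have hw := hwid h h' (reflAdj_mono hle hr2)
    have hpre : {x | (i, x) ∈ B h} ∪ {x | (i, x) ∈ B h'}
        = (fun a : KV (d + 1) (w + 1) => ((i, a) : Fin (w + 1) × KV (d + 1) (w + 1)))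
          ⁻¹' (B h ∪ B h') := rfl
    rw [hpre]
    have hinj : Function.Injective
        (fun a : KV (d + 1) (w + 1) => ((i, a) : Fin (w + 1) × KV (d + 1) (w + 1))) := by
      intro x y hxy; exact congrArg Prod.snd hxy
    have h1 := Set.ncard_le_ncard
      (Set.image_preimage_subset (fun a : KV (d + 1) (w + 1) =>
        ((i, a) : Fin (w + 1) × KV (d + 1) (w + 1))) (B h ∪ B h')) (Set.toFinite _)
    rw [Set.ncard_image_of_injective _ hinj] at h1
    omega
  exact hF m H' ⟨hH'acyc, hH'h⟩ (fun h => {x | (i, x) ∈ B h}) ⟨hcov, hconn⟩ hwid'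

end TDH
namespace TDH

open SimpleGraph Walk

variable {α β : Type}

lemma induce_acyclic {H : SimpleGraph β} {S : Set β} (h : H.IsAcyclic) :
    (H.induce S).IsAcyclic := by
  intro v c hc
  have hinj : Function.Injective ⇑(SimpleGraph.Embedding.induce S (G := H)).toHom :=
    (SimpleGraph.Embedding.induce S (G := H)).injective
  exact h _ ((Walk.map_isCycle_iff_of_injective hinj).mpr hc)

lemma stepB {d w : ℕ}
    (hT : NoDecon (copies (w + 1) (kAryTree d (w + 1))) (HostT d) w) :
    NoDecon (kAryTree (d + 1) (w + 1)) (HostF d) w := by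
  classical
  intro m H hHost B hdec hwid
  obtain ⟨hAc, hFH⟩ := hHost
  obtain ⟨h₀, hh₀⟩ := supp_nonempty hdec (kroot (d + 1) (w + 1))
  obtain ⟨c, hc1, hc2⟩ := hFH h₀
  have hc1' : H.Reachable c h₀ := hc1
  have hc2' : ∀ u, H.Reachable c u → H.dist c u ≤ d := hc2
  set S : Set (Fin m) := {v | H.Reachable c v} with hSdef
  have hSclosed : ∀ {x y : Fin m}, x ∈ S → H.Reachable x y → y ∈ S :=
    fun hx hr => hx.trans hr
  have hsupS : ∀ g : KV (d + 1) (w + 1), (∃ h, g ∈ B h ∧ h ∈ S) →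
      ∀ h, g ∈ B h → h ∈ S := by
    intro g hex h hm
    obtain ⟨h1, hm1, hS1⟩ := hex
    exact hSclosed hS1 (ConnSet.reachable (hdec.2 g) hm1 hm)
  have hρS : ∀ h, kroot (d + 1) (w + 1) ∈ B h → h ∈ S :=
    hsupS _ ⟨h₀, hh₀, hc1'⟩
  have hstep : ∀ g g' : KV (d + 1) (w + 1), (∀ h, g ∈ B h → h ∈ S) →
      (kAryTree (d + 1) (w + 1)).Adj g g' → (∀ h, g' ∈ B h → h ∈ S) := by
    intro g g' hg hadj
    obtain ⟨x, x', hrx, hmg, hmg'⟩ := hdec.1 g g' (Or.inr hadj)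
    have hxS : x ∈ S ∨ x' ∈ S := by
      rcases hmg with h | h
      · exact Or.inl (hg x h)
      · exact Or.inr (hg x' h)
    have hboth : x ∈ S ∧ x' ∈ S := by
      rcases hrx with rfl | ha
      · rcases hxS with h | h <;> exact ⟨h, h⟩
      · rcases hxS with h | h
        · exact ⟨h, hSclosed h ha.reachable⟩
        · exact ⟨hSclosed h ha.symm.reachable, h⟩
    apply hsupS g'
    rcases hmg' with h | h
    · exact ⟨x, h, hboth.1⟩
    · exact ⟨x', h, hboth.2⟩
  have hall : ∀ g : KV (d + 1) (w + 1), ∀ h, g ∈ B h → h ∈ S := by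
    have aux : ∀ {x y : KV (d + 1) (w + 1)} (W : (kAryTree (d + 1) (w + 1)).Walk x y),
        (∀ h, x ∈ B h → h ∈ S) → (∀ h, y ∈ B h → h ∈ S) := by
      intro x y W
      induction W with
      | nil => exact id
      | cons hadj W ih => intro hx; exact ih (hstep _ _ hx hadj)
    intro g
    obtain ⟨W, -⟩ := kAry_walk_from_root g
    exact aux W hρS
  have hBempty : ∀ h, h ∉ S → B h = ∅ := by
    intro h hh
    ext g
    simp only [Set.mem_empty_iff_false, iff_false]
    exact fun hm => hh (hall g h hm)
  -- walks from `c` stay in `S`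
  have hsupp_in_S : ∀ {x : Fin m} (W : H.Walk c x), ∀ z ∈ W.support, z ∈ S := by
    intro x W z hz
    exact ⟨(W.takeUntil z hz)⟩
  -- the induced graph on `S` is a tree of height at most `d`
  have hcS : c ∈ S := Reachable.refl c
  have hHSconn : (H.induce S).Connected := by
    have hpre : ∀ x : ↥S, (H.induce S).Reachable ⟨c, hcS⟩ x := by
      rintro ⟨x, hx⟩
      have hx2 : x ∈ S := hx
      obtain ⟨W⟩ := (hx : H.Reachable c x)
      obtain ⟨W', -⟩ := exists_induce_walk W (hsupp_in_S W) hcS hx2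
      exact ⟨W'⟩
    have : Nonempty ↥S := ⟨⟨c, hcS⟩⟩
    exact Connected.mk (fun x y => (hpre x).symm.trans (hpre y))
  have hHStree : (H.induce S).IsTree := ⟨hHSconn, induce_acyclic hAc⟩
  have hHSheight : ∀ v : ↥S, (H.induce S).dist ⟨c, hcS⟩ v ≤ d := by
    rintro ⟨x, hx⟩
    have hx2 : x ∈ S := hx
    obtain ⟨W, hW⟩ := (hx : H.Reachable c x).exists_walk_length_eq_dist
    obtain ⟨W', hW'⟩ := exists_induce_walk W (hsupp_in_S W) hcS hx2
    have h1 := SimpleGraph.dist_le W'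
    rw [hW', hW] at h1
    exact le_trans h1 (hc2' x hx2)
  -- a model of the induced graph on `Fin m'`
  obtain ⟨m', S', ⟨η⟩⟩ := exists_fin_iso (H.induce S)
  have hHostT : HostT d m' S' :=
    classTd_of_iso η hHStree ⟨⟨c, hcS⟩, hHSheight⟩
  -- the bags for the forest of copies
  set B' : Fin m' → Set (Fin (w + 1) × KV d (w + 1)) :=
    fun h => {p | iota p ∈ B ((η h : ↥S) : Fin m)} with hB'def
  have hcov : ∀ p q : Fin (w + 1) × KV d (w + 1),
      reflAdj (copies (w + 1) (kAryTree d (w + 1))) p q →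
      ∃ h h', reflAdj S' h h' ∧ p ∈ B' h ∪ B' h' ∧ q ∈ B' h ∪ B' h' := by
    intro p q hrefl
    have hrefl2 : reflAdj (kAryTree (d + 1) (w + 1)) (iota p) (iota q) := by
      rcases hrefl with rfl | hadj
      · exact Or.inl rfl
      · exact Or.inr (iota_adj.mp hadj)
    obtain ⟨x, x', hrx, hm, hm'⟩ := hdec.1 _ _ hrefl2
    by_cases hxS : x ∈ S
    · by_cases hx'S : x' ∈ S
      · refine ⟨η.symm ⟨x, hxS⟩, η.symm ⟨x', hx'S⟩, ?_, ?_, ?_⟩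
        · rcases hrx with rfl | ha
          · exact Or.inl rfl
          · refine Or.inr ?_
            have : (H.induce S).Adj ⟨x, hxS⟩ ⟨x', hx'S⟩ := ha
            rw [← η.symm.map_adj_iff] at this
            exact this
        · rcases hm with h | h
          · exact Or.inl (by show iota p ∈ B _; rw [RelIso.apply_symm_apply]; exact h)
          · exact Or.inr (by show iota p ∈ B _; rw [RelIso.apply_symm_apply]; exact h)
        · rcases hm' with h | h
          · exact Or.inl (by show iota q ∈ B _; rw [RelIso.apply_symm_apply]; exact h)
          · exact Or.inr (by show iota q ∈ B _; rw [RelIso.apply_symm_apply]; exact h)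
      · have hmx : iota p ∈ B x := by
          rcases hm with h | h
          · exact h
          · rw [hBempty x' hx'S] at h; exact absurd h (Set.notMem_empty _)
        have hmx' : iota q ∈ B x := by
          rcases hm' with h | h
          · exact h
          · rw [hBempty x' hx'S] at h; exact absurd h (Set.notMem_empty _)
        refine ⟨η.symm ⟨x, hxS⟩, η.symm ⟨x, hxS⟩, Or.inl rfl, ?_, ?_⟩
        · exact Or.inl (by show iota p ∈ B _; rw [RelIso.apply_symm_apply]; exact hmx)
        · exact Or.inl (by show iota q ∈ B _; rw [RelIso.apply_symm_apply]; exact hmx')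
    · have hx'S : x' ∈ S := by
        rcases hm with h | h
        · exact absurd (hall _ _ h) hxS
        · exact hall _ _ h
      have hmx : iota p ∈ B x' := by
        rcases hm with h | h
        · exact absurd (hall _ _ h) hxS
        · exact h
      have hmx' : iota q ∈ B x' := by
        rcases hm' with h | h
        · rw [hBempty x hxS] at h; exact absurd h (Set.notMem_empty _)
        · exact h
      refine ⟨η.symm ⟨x', hx'S⟩, η.symm ⟨x', hx'S⟩, Or.inl rfl, ?_, ?_⟩
      · exact Or.inl (by show iota p ∈ B _; rw [RelIso.apply_symm_apply]; exact hmx)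
      · exact Or.inl (by show iota q ∈ B _; rw [RelIso.apply_symm_apply]; exact hmx')
  have hconn : ∀ p : Fin (w + 1) × KV d (w + 1), ConnSet S' {h | p ∈ B' h} := by
    intro p
    set s : Set (Fin m) := {h | iota p ∈ B h} with hsdef
    have hsS : s ⊆ S := fun h hh => hall (iota p) h hh
    have hcs : (H.induce s).Connected := hdec.2 (iota p)
    -- iso between induced supports
    have hmem : ∀ h' : Fin m', h' ∈ {h | p ∈ B' h} ↔ ((η h' : ↥S) : Fin m) ∈ s := by
      intro h'; rfl
    let ψequiv : ↥s ≃ ↥{h | p ∈ B' h} :=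
      { toFun := fun x => ⟨η.symm ⟨x.1, hsS x.2⟩, by
          show iota p ∈ B ((η (η.symm ⟨x.1, hsS x.2⟩) : ↥S) : Fin m)
          rw [RelIso.apply_symm_apply]
          exact x.2⟩
        invFun := fun h' => ⟨((η h'.1 : ↥S) : Fin m), h'.2⟩
        left_inv := by
          rintro ⟨x, hx⟩
          simp only [RelIso.apply_symm_apply]
        right_inv := by
          rintro ⟨h', hh'⟩
          simp only [Subtype.coe_eta, RelIso.symm_apply_apply] }
    have hψ : ∀ x y : ↥s, (S'.induce {h | p ∈ B' h}).Adj (ψequiv x) (ψequiv y)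
        ↔ (H.induce s).Adj x y := by
      rintro ⟨x, hx⟩ ⟨y, hy⟩
      show S'.Adj (η.symm ⟨x, hsS hx⟩) (η.symm ⟨y, hsS hy⟩) ↔ H.Adj x y
      rw [η.symm.map_adj_iff]
      rfl
    let ψ : (H.induce s) ≃g (S'.induce {h | p ∈ B' h}) :=
      { toEquiv := ψequiv
        map_rel_iff' := by intro x y; exact hψ x y }
    exact (Iso.connected_iff ψ).mp hcs
  have hwid' : DeconWidthLE S' B' w := by
    intro h h' hrx
    have hrx2 : reflAdj H ((η h : ↥S) : Fin m) ((η h' : ↥S) : Fin m) := by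
      rcases hrx with rfl | ha
      · exact Or.inl rfl
      · refine Or.inr ?_
        have := η.map_adj_iff.mpr ha
        exact this
    have hw := hwid _ _ hrx2
    have hpre : B' h ∪ B' h' = iota ⁻¹'
        (B ((η h : ↥S) : Fin m) ∪ B ((η h' : ↥S) : Fin m)) := rfl
    rw [hpre]
    have h1 := Set.ncard_le_ncard
      (Set.image_preimage_subset iota (B ((η h : ↥S) : Fin m) ∪ B ((η h' : ↥S) : Fin m)))
      (Set.toFinite _)
    rw [Set.ncard_image_of_injective _ iota_inj] at h1
    omega
  exact hT m' S' hHostT B' ⟨hcov, hconn⟩ hwid'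

end TDH
namespace TDH

lemma main (d w : ℕ) :
    NoDecon (copies (w + 1) (kAryTree d (w + 1))) (HostT d) w ∧
    NoDecon (kAryTree (d + 1) (w + 1)) (HostF d) w := by
  induction d with
  | zero =>
      have h1 := base_case w
      exact ⟨h1, stepB h1⟩
  | succ d ih =>
      have h1 := stepA ih.2
      exact ⟨h1, stepB h1⟩

end TDH

/-- for each `d ≥ 0`, (1) `ℱ_d ⋠ 𝒯_d` and (2) `𝒯_{d+1} ⋠ ℱ_d`. -/
theorem bounded_td_hierarchy (d : ℕ) :
    ¬ DeconLE (classFd d) (classTd d) ∧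
    ¬ DeconLE (classTd (d + 1)) (classFd d) := by
  constructor
  · rintro ⟨w, hw⟩
    obtain ⟨n, G', ⟨φ⟩⟩ := TDH.exists_fin_iso (TDH.copies (w + 1) (kAryTree d (w + 1)))
    have hmem : (⟨n, G'⟩ : FinGraph) ∈ classFd d :=
      TDH.classFd_of_iso φ (TDH.copies_acyclic d (w + 1)) (TDH.copies_heights d (w + 1))
    obtain ⟨Hf, hHf, B, hdec, hwid⟩ := hw ⟨n, G'⟩ hmem
    have hnd : TDH.NoDecon G' (TDH.HostT d) w :=
      ((TDH.main d w).1).of_iso φ.symm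
    exact hnd Hf.n Hf.G ⟨hHf.1, hHf.2⟩ B hdec hwid
  · rintro ⟨w, hw⟩
    obtain ⟨n, G', ⟨φ⟩⟩ := TDH.exists_fin_iso (kAryTree (d + 1) (w + 1))
    have hmem : (⟨n, G'⟩ : FinGraph) ∈ classTd (d + 1) :=
      TDH.classTd_of_iso φ (TDH.kAry_isTree (d + 1) (w + 1))
        ⟨TDH.kroot (d + 1) (w + 1), TDH.kAry_dist_root (d + 1) (w + 1)⟩
    obtain ⟨Hf, hHf, B, hdec, hwid⟩ := hw ⟨n, G'⟩ hmem
    have hnd : TDH.NoDecon G' (TDH.HostF d) w :=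
      ((TDH.main d w).2).of_iso φ.symm
    exact hnd Hf.n Hf.G ⟨hHf.1, hHf.2⟩ B hdec hwid
end

section
/- Let σ be a finite relational first-order language, let v = (p_1,…,p_r) be a game vector, and let T and B be finite σ-structures such that T has a v-decomposition. If there exists a Duplicator winning strategy for the v-game on (T,B), then there is a homomorphism from T to B. -/
/-- A finite relational first-order language: a finite set of relation symbols,
each with an arity. -/
structure RelSig where
  symbols : Type
  ar : symbols → ℕ
  fin : Finite symbols

/-- A relational `σ`-structure. -/
structure RelStruct (σ : RelSig) where
  carrier : Type
  rel : ∀ s : σ.symbols, (Fin (σ.ar s) → carrier) → Prop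

/-- `h` is a homomorphism from `A` to `B`. -/
def IsRelHom {σ : RelSig} (A B : RelStruct σ) (h : A.carrier → B.carrier) : Prop :=
  ∀ (s : σ.symbols) (t : Fin (σ.ar s) → A.carrier),
    A.rel s t → B.rel s (fun i => h (t i))

/-- The domain of a partial map `α → Option β`. -/
def pdom {α β : Type} (f : α → Option β) : Set α := {a | f a ≠ none}

/-- `f` (a partial map) is a partial homomorphism from `A` to `B`: every tuple of
every relation of `A` all of whose entries lie in the domain of `f` is mapped to
a tuple of the corresponding relation of `B`. -/
def IsPartialHom {σ : RelSig} (A B : RelStruct σ)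
    (f : A.carrier → Option B.carrier) : Prop :=
  ∀ (s : σ.symbols) (t : Fin (σ.ar s) → A.carrier), A.rel s t →
    ∀ u : Fin (σ.ar s) → B.carrier, (∀ i, f (t i) = some (u i)) → B.rel s u

/-- A game vector `v = (p_1, …, p_r)` with `r ≥ 1` rounds; `p i` is the
(0-indexed) `i`-th entry, i.e. `p_{i+1}`. -/
structure GameVec where
  r : ℕ
  hr : 1 ≤ r
  p : ℕ → ℕ

/-- There is a Duplicator winning strategy `W_1, …, W_r` (0-indexed here as
`W 0, …, W (r-1)`) for the `v`-game on `(A, B)`. -/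
def DuplicatorWins {σ : RelSig} (v : GameVec) (A B : RelStruct σ) : Prop :=
  ∃ W : ℕ → Set (A.carrier → Option B.carrier),
    (∀ i, i < v.r → ∀ g ∈ W i, IsPartialHom A B g) ∧
    (∀ S : Set A.carrier, S.ncard ≤ v.p 0 → ∃ g ∈ W 0, pdom g = S) ∧
    (∀ i, i + 1 < v.r → ∀ g ∈ W i, ∀ S : Set A.carrier, pdom g ⊆ S →
      (S \ pdom g).ncard ≤ v.p (i + 1) →
      ∃ g' ∈ W (i + 1), pdom g' = S ∧ ∀ a ∈ pdom g, g' a = g a)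

/-- A finite rooted forest, given by a parent function on `Fin m`; roots are the
fixed points, and from every vertex iterating the parent function reaches a root. -/
structure RootedForest where
  m : ℕ
  par : Fin m → Fin m
  wf : ∀ x : Fin m, ∃ k : ℕ, par^[k + 1] x = par^[k] x

/-- The depth of a node (number of edges on the path to its root); roots have
depth `0`, so a node at depth `i` is at level `i + 1`. -/
def RootedForest.depth (F : RootedForest) (x : Fin F.m) : ℕ := Nat.find (F.wf x)

/-- The underlying (simple) graph of a rooted forest. -/
def RootedForest.graph (F : RootedForest) : SimpleGraph (Fin F.m) :=
  SimpleGraph.fromRel (fun x y => F.par x = y)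

/-- `(B h)_h` (indexed by the rooted forest `F` of height `< v.r`) is a
`v`-decomposition of the structure `A`. -/
def IsVDecomp {σ : RelSig} (v : GameVec) (A : RelStruct σ) (F : RootedForest)
    (B : Fin F.m → Set A.carrier) : Prop :=
  (∀ x, F.depth x < v.r) ∧
  (∀ (s : σ.symbols) (t : Fin (σ.ar s) → A.carrier), A.rel s t →
    ∃ h, ∀ i, t i ∈ B h) ∧
  (∀ a : A.carrier, ((F.graph).induce {h | a ∈ B h}).Connected) ∧
  (∀ x, F.par x = x → (B x).ncard ≤ v.p 0) ∧
  (∀ x, F.par x ≠ x →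
    B (F.par x) ⊆ B x ∧ (B x \ B (F.par x)).ncard ≤ v.p (F.depth x))

/-- `A` has a `v`-decomposition. -/
def HasVDecomp {σ : RelSig} (v : GameVec) (A : RelStruct σ) : Prop :=
  ∃ (F : RootedForest) (B : Fin F.m → Set A.carrier), IsVDecomp v A F B

/-- A set vector `(C_1, …, C_m)` of the game vector `v` (as a list, head = `C_1`). -/
def IsSetVec (v : GameVec) {α : Type} (s : List (Set α)) : Prop :=
  1 ≤ s.length ∧ s.length ≤ v.r ∧ (s.getD 0 ∅).ncard ≤ v.p 0 ∧
  ∀ i, i + 1 < s.length →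
    s.getD i ∅ ⊆ s.getD (i + 1) ∅ ∧
    (s.getD (i + 1) ∅ \ s.getD i ∅).ncard ≤ v.p (i + 1)

/-- The structure `T_v(A)`: its universe is the union over all set vectors `s`
of the bags `B_s = {(a, u(a,s)) : a ∈ C_m}`, where `u(a,s)` is the shortest
prefix of `s` whose last entry contains `a`; equivalently, it consists of the
pairs `(a, u)` where `u` is a set vector whose last entry contains `a` and none
of whose earlier entries contains `a`.  A tuple is in `R^{T_v(A)}` iff its tuple
of first coordinates is in `R^A`. -/
def TvA {σ : RelSig} (v : GameVec) (A : RelStruct σ) : RelStruct σ where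
  carrier := {q : A.carrier × List (Set A.carrier) //
    IsSetVec v q.2 ∧ q.1 ∈ q.2.getLastD ∅ ∧
    ∀ i, i + 1 < q.2.length → q.1 ∉ q.2.getD i ∅}
  rel := fun s t => A.rel s (fun i => (t i).1.1)

/-- `C` is a core: every homomorphism from `C` to itself is injective. -/
def IsCoreStruct {σ : RelSig} (C : RelStruct σ) : Prop :=
  ∀ h : C.carrier → C.carrier, IsRelHom C C h → Function.Injective h

/-- `C` is (a copy of) the core of `A`: `C` is a core, there is a homomorphism
from `A` to `C`, and `C` is a substructure of `A` (its universe embeds into that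
of `A`, with each relation of `C` carried into the corresponding relation of `A`). -/
def IsCoreOf {σ : RelSig} (C A : RelStruct σ) : Prop :=
  IsCoreStruct C ∧ (∃ h : A.carrier → C.carrier, IsRelHom A C h) ∧
  ∃ ι : C.carrier → A.carrier, Function.Injective ι ∧
    ∀ (s : σ.symbols) (t : Fin (σ.ar s) → C.carrier),
      C.rel s t → A.rel s (fun i => ι (t i))

lemma RootedForest.depth_eq_zero (F : RootedForest) {x : Fin F.m} :
    F.depth x = 0 ↔ F.par x = x := by
  simp [RootedForest.depth, Nat.find_eq_zero]

lemma RootedForest.depth_par (F : RootedForest) {x : Fin F.m} (h : F.par x ≠ x) :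
    F.depth x = F.depth (F.par x) + 1 := by
  have iter : ∀ k, F.par^[k] (F.par x) = F.par^[k+1] x := fun k =>
    (Function.iterate_succ_apply F.par k x).symm
  have hd : F.depth x ≠ 0 := fun h0 => h (F.depth_eq_zero.mp h0)
  have hspec : F.par^[F.depth x + 1] x = F.par^[F.depth x] x := Nat.find_spec (F.wf x)
  have h1 : F.depth (F.par x) ≤ F.depth x - 1 := by
    apply Nat.find_le
    rw [iter, iter]
    have : F.depth x - 1 + 1 = F.depth x := Nat.succ_pred_eq_of_ne_zero hd
    rw [this]
    exact hspec
  have h2 : F.depth x ≤ F.depth (F.par x) + 1 := by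
    apply Nat.find_le
    have := Nat.find_spec (F.wf (F.par x))
    rw [iter, iter] at this
    exact this
  omega

lemma RootedForest.depth_par_lt (F : RootedForest) {x : Fin F.m} (h : F.par x ≠ x) :
    F.depth (F.par x) < F.depth x := by
  rw [F.depth_par h]; omega

/-- Build a coherent family of partial maps along the forest. -/
noncomputable def buildG {α β : Type} (F : RootedForest) (Bg : Fin F.m → Set α)
    (W : ℕ → Set (α → Option β))
    (hroot : ∀ x, F.par x = x → ∃ g ∈ W 0, pdom g = Bg x)
    (hchild : ∀ x, F.par x ≠ x → ∀ g ∈ W (F.depth (F.par x)), pdom g = Bg (F.par x) →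
       ∃ g' ∈ W (F.depth x), pdom g' = Bg x ∧ ∀ a ∈ Bg (F.par x), g' a = g a)
    (x : Fin F.m) : {g : α → Option β // g ∈ W (F.depth x) ∧ pdom g = Bg x} :=
  if h : F.par x = x then
    ⟨(hroot x h).choose, by
      have hs := (hroot x h).choose_spec
      have hd : F.depth x = 0 := F.depth_eq_zero.mpr h
      rw [hd]; exact hs⟩
  else
    let gp := buildG F Bg W hroot hchild (F.par x)
    ⟨(hchild x h gp.1 gp.2.1 gp.2.2).choose,
      ((hchild x h gp.1 gp.2.1 gp.2.2).choose_spec).1,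
      ((hchild x h gp.1 gp.2.1 gp.2.2).choose_spec).2.1⟩
termination_by F.depth x
decreasing_by exact F.depth_par_lt h

lemma buildG_ext {α β : Type} (F : RootedForest) (Bg : Fin F.m → Set α)
    (W : ℕ → Set (α → Option β))
    (hroot : ∀ x, F.par x = x → ∃ g ∈ W 0, pdom g = Bg x)
    (hchild : ∀ x, F.par x ≠ x → ∀ g ∈ W (F.depth (F.par x)), pdom g = Bg (F.par x) →
       ∃ g' ∈ W (F.depth x), pdom g' = Bg x ∧ ∀ a ∈ Bg (F.par x), g' a = g a)
    (x : Fin F.m) (h : F.par x ≠ x) :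
    ∀ a ∈ Bg (F.par x), (buildG F Bg W hroot hchild x).1 a
      = (buildG F Bg W hroot hchild (F.par x)).1 a := by
  rw [buildG]
  simp only [h, dite_false]
  exact fun a ha =>
    ((hchild x h _ (buildG F Bg W hroot hchild (F.par x)).2.1
      (buildG F Bg W hroot hchild (F.par x)).2.2).choose_spec).2.2 a ha

lemma constant_of_connected {V : Type*} {G : SimpleGraph V} (hc : G.Connected)
    {β : Type*} (f : V → β) (hf : ∀ x y, G.Adj x y → f x = f y) (x y : V) :
    f x = f y := by
  obtain ⟨w⟩ := hc.preconnected x y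
  induction w with
  | nil => rfl
  | cons h p ih => exact (hf _ _ h).trans ih

/-- if `T` has a `v`-decomposition and Duplicator wins the
`v`-game on `(T, B)`, then there is a homomorphism from `T` to `B`. -/
theorem strategy_to_hom (σ : RelSig) (v : GameVec) (T B : RelStruct σ)
    (hT : Finite T.carrier) (hB : Finite B.carrier)
    (hdec : HasVDecomp v T) (hwin : DuplicatorWins v T B) :
    ∃ h : T.carrier → B.carrier, IsRelHom T B h := by
  obtain ⟨F, Bg, hdepth, hcover, hconn, hrt, hch⟩ := hdec
  obtain ⟨W, hph, hinit, hext⟩ := hwin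
  -- hypotheses for buildG
  have hroot : ∀ x, F.par x = x → ∃ g ∈ W 0, pdom g = Bg x := fun x hx =>
    hinit (Bg x) (hrt x hx)
  have hchild : ∀ x, F.par x ≠ x → ∀ g ∈ W (F.depth (F.par x)),
      pdom g = Bg (F.par x) →
      ∃ g' ∈ W (F.depth x), pdom g' = Bg x ∧ ∀ a ∈ Bg (F.par x), g' a = g a := by
    intro x hx g hg hdom
    have hdx : F.depth x = F.depth (F.par x) + 1 := F.depth_par hx
    have hlt : F.depth (F.par x) + 1 < v.r := hdx ▸ hdepth x
    obtain ⟨hsub, hcard⟩ := hch x hx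
    obtain ⟨g', hg', hdom', hext'⟩ :=
      hext (F.depth (F.par x)) hlt g hg (Bg x) (by rw [hdom]; exact hsub)
        (by rw [hdom, ← hdx]; exact hcard)
    exact ⟨g', by rw [hdx]; exact hg', hdom', fun a ha => hext' a (hdom ▸ ha)⟩
  set G := buildG F Bg W hroot hchild with hG
  -- well-definedness across bags
  have hwd : ∀ (a : T.carrier) (x y : Fin F.m), a ∈ Bg x → a ∈ Bg y →
      (G x).1 a = (G y).1 a := by
    intro a x y hx hy
    have hc := hconn a
    have key := constant_of_connected hc
      (f := fun z : {h : Fin F.m | a ∈ Bg h} => (G z.1).1 a) ?_ ⟨x, hx⟩ ⟨y, hy⟩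
    · exact key
    · rintro ⟨u, hu⟩ ⟨w, hw⟩ hadj
      rw [SimpleGraph.comap_adj] at hadj
      rw [RootedForest.graph, SimpleGraph.fromRel_adj] at hadj
      simp only [Function.Embedding.coe_subtype] at hadj
      obtain ⟨hne', hor⟩ := hadj
      show (G u).1 a = (G w).1 a
      rcases hor with h1 | h2
      · have hpu : F.par u ≠ u := by rw [h1]; exact fun e => hne' e.symm
        rw [← h1, hG]
        exact buildG_ext F Bg W hroot hchild u hpu a (by rw [h1]; exact hw)
      · have hpw : F.par w ≠ w := by rw [h2]; exact hne'
        rw [← h2, hG]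
        exact (buildG_ext F Bg W hroot hchild w hpw a (by rw [h2]; exact hu)).symm
  -- the total map
  have hHa : ∀ a : T.carrier, ∃ b : B.carrier, ∀ x, a ∈ Bg x → (G x).1 a = some b := by
    intro a
    obtain ⟨⟨x0, hx0⟩⟩ := (hconn a).nonempty
    have hdom0 : a ∈ pdom (G x0).1 := by rw [(G x0).2.2]; exact hx0
    obtain ⟨b, hb⟩ := Option.ne_none_iff_exists'.mp hdom0
    exact ⟨b, fun x hx => (hwd a x x0 hx hx0).trans hb⟩
  choose H hH using hHa
  refine ⟨H, ?_⟩
  intro s t hrel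
  obtain ⟨x, hx⟩ := hcover s t hrel
  have hph' : IsPartialHom T B (G x).1 := hph (F.depth x) (hdepth x) _ (G x).2.1
  exact hph' s t hrel (fun i => H (t i)) (fun i => hH (t i) x (hx i))
end
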